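/- arXiv:math/0504303 — 5 statements merged into one kernel-verified Lean document; each statement's English description precedes it below -/
import Mathlib

section
/- Let k be a number field and let P ∈ ℙ^1(k). Then there exists a sequence (Q_i) in ℙ^1(k) ∖ {P} with dist(P, Q_i) → 0 and sup_i dist(P, Q_i) · H(Q_i) < ∞; consequently, the approximation constant of P on ℙ^1(k) exists and equals 1. -/
open NumberField Filter Topology

noncomputable section

variable (k : Type*) [Field k] [NumberField k]

/-- The absolute multiplicative Weil height of a coordinate vector over `k`. -/
def vecHeight {ι : Type*} [Fintype ι] (x : ι → k) : ℝ :=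
  ((∏ v : InfinitePlace k, (⨆ j, v (x j)) ^ v.mult) /
      ((FractionalIdeal.absNorm (FractionalIdeal.spanFinset (𝓞 k) Finset.univ x) : ℚ) : ℝ)) ^
    ((Module.finrank ℚ k : ℝ)⁻¹)

/-- The absolute multiplicative Weil height on projective space. -/
def projHeight {m : ℕ} (P : Projectivization k (Fin m → k)) : ℝ :=
  vecHeight k P.rep

/-- The archimedean distance between two points of projective space. -/
def projDist {m : ℕ} (P Q : Projectivization k (Fin m → k)) : ℝ :=
  ∑ v : InfinitePlace k,
    (⨆ p : Fin m × Fin m, v (P.rep p.1 * Q.rep p.2 - P.rep p.2 * Q.rep p.1)) /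
      ((⨆ j, v (P.rep j)) * (⨆ j, v (Q.rep j)))

/-- `α` is the approximation constant of the sequence `Q` with respect to the
point `P`, the distance function `d` and the height function `h`. -/
def IsApproxConst {X : Type*} (d : X → X → ℝ) (h : X → ℝ) (P : X) (Q : ℕ → X) (α : ℝ) : Prop :=
  IsLeast {a : ℝ | 0 ≤ a ∧ ∃ C : ℝ, ∀ i, d P (Q i) ^ a * h (Q i) ≤ C} α

/-- `Q` is a sequence of points distinct from `P` converging to `P`. -/
def ApproxSeq {X : Type*} (d : X → X → ℝ) (P : X) (Q : ℕ → X) : Prop :=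
  (∀ i, Q i ≠ P) ∧ Tendsto (fun i => d P (Q i)) atTop (𝓝 0)

/-- `α` is the approximation constant of `P` on `S`. -/
def IsPointApproxConst {X : Type*} (d : X → X → ℝ) (h : X → ℝ) (S : Set X) (P : X) (α : ℝ) :
    Prop :=
  IsLeast {a : ℝ | ∃ Q : ℕ → X, (∀ i, Q i ∈ S) ∧ ApproxSeq d P Q ∧ IsApproxConst d h P Q a} α

/-- `Q` is a sequence of best approximation to `P` on `S`. -/
def IsBestApproxSeq {X : Type*} (d : X → X → ℝ) (h : X → ℝ) (S : Set X) (P : X) (Q : ℕ → X) :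
    Prop :=
  (∀ i, Q i ∈ S) ∧ ApproxSeq d P Q ∧
    ∃ α : ℝ, IsApproxConst d h P Q α ∧ IsPointApproxConst d h S P α

/-- The set of `k`-points of the line through two points of projective space. -/
def lineThrough {m : ℕ} (P Q : Projectivization k (Fin m → k)) :
    Set (Projectivization k (Fin m → k)) :=
  {R | R.rep ∈ Submodule.span k {P.rep, Q.rep}}

/-- The Plücker height of the line through two distinct points. -/
def plueckerHeight {m : ℕ} (P Q : Projectivization k (Fin m → k)) : ℝ :=
  vecHeight k (fun p : Fin m × Fin m => P.rep p.1 * Q.rep p.2 - P.rep p.2 * Q.rep p.1)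


namespace S2Aux

open FractionalIdeal Projectivization
open scoped nonZeroDivisors

variable {k}

/-- sup of place over coordinates -/
def sv (v : InfinitePlace k) (x : Fin 2 → k) : ℝ := ⨆ j, v (x j)

lemma sv_eq_max (v : InfinitePlace k) (x : Fin 2 → k) :
    sv v x = max (v (x 0)) (v (x 1)) := by
  apply le_antisymm
  · exact ciSup_le fun j => by fin_cases j; exacts [le_max_left _ _, le_max_right _ _]
  · exact max_le (le_ciSup (f := fun j => v (x j)) (Set.finite_range _).bddAbove 0)
      (le_ciSup (f := fun j => v (x j)) (Set.finite_range _).bddAbove 1)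

lemma sv_nonneg (v : InfinitePlace k) (x : Fin 2 → k) : 0 ≤ sv v x := by
  rw [sv_eq_max]; exact le_max_of_le_left (AbsoluteValue.nonneg v.1 _)

lemma sv_pos (v : InfinitePlace k) {x : Fin 2 → k} (hx : x ≠ 0) : 0 < sv v x := by
  rw [sv_eq_max]
  rcases Function.ne_iff.mp hx with ⟨j, hj⟩
  fin_cases j
  · exact lt_max_of_lt_left (NumberField.InfinitePlace.pos_iff.mpr hj)
  · exact lt_max_of_lt_right (NumberField.InfinitePlace.pos_iff.mpr hj)

lemma sv_smul (v : InfinitePlace k) (c : k) (x : Fin 2 → k) :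
    sv v (c • x) = v c * sv v x := by
  simp only [sv_eq_max, Pi.smul_apply, smul_eq_mul, _root_.map_mul]
  exact (mul_max_of_nonneg _ _ (AbsoluteValue.nonneg v.1 c)).symm

/-- 2x2 determinant -/
def Dxy (x y : Fin 2 → k) : k := x 0 * y 1 - x 1 * y 0

lemma iSup_Dxy (v : InfinitePlace k) (x y : Fin 2 → k) :
    (⨆ p : Fin 2 × Fin 2, v (x p.1 * y p.2 - x p.2 * y p.1)) = v (Dxy x y) := by
  apply le_antisymm
  · refine ciSup_le ?_
    rintro ⟨p1, p2⟩
    fin_cases p1 <;> fin_cases p2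
    · show v (x 0 * y 0 - x 0 * y 0) ≤ v (Dxy x y)
      simpa using AbsoluteValue.nonneg v.1 _
    · show v (x 0 * y 1 - x 1 * y 0) ≤ v (Dxy x y)
      exact le_of_eq rfl
    · show v (x 1 * y 0 - x 0 * y 1) ≤ v (Dxy x y)
      rw [show x 1 * y 0 - x 0 * y 1 = -(Dxy x y) by unfold Dxy; ring]
      exact le_of_eq (AbsoluteValue.map_neg v.1 _)
    · show v (x 1 * y 1 - x 1 * y 1) ≤ v (Dxy x y)
      simpa using AbsoluteValue.nonneg v.1 _
  · exact le_ciSup (f := fun p : Fin 2 × Fin 2 => v (x p.1 * y p.2 - x p.2 * y p.1))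
      (Set.finite_range _).bddAbove ((0 : Fin 2), (1 : Fin 2))


lemma projDist_def {P Q : Projectivization k (Fin 2 → k)} :
    projDist k P Q = ∑ v : InfinitePlace k,
      v (Dxy P.rep Q.rep) / (sv v P.rep * sv v Q.rep) := by
  unfold projDist sv
  exact Finset.sum_congr rfl fun v _ => by rw [iSup_Dxy]

lemma Dxy_eq_zero {x y : Fin 2 → k} (hx : x ≠ 0) (h : Dxy x y = 0) : ∃ c : k, c • x = y := by
  have h' : x 0 * y 1 = x 1 * y 0 := sub_eq_zero.mp h
  by_cases h0 : x 0 = 0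
  · have h1 : x 1 ≠ 0 := by
      intro h1; apply hx; funext i; fin_cases i
      · exact h0
      · exact h1
    have hy0 : y 0 = 0 := by
      have : x 1 * y 0 = 0 := by rw [← h', h0, zero_mul]
      exact (mul_eq_zero.mp this).resolve_left h1
    refine ⟨y 1 / x 1, funext fun i => ?_⟩
    fin_cases i
    · show y 1 / x 1 * x 0 = y 0
      rw [h0, hy0, mul_zero]
    · show y 1 / x 1 * x 1 = y 1
      rw [div_mul_cancel₀ _ h1]
  · refine ⟨y 0 / x 0, funext fun i => ?_⟩
    fin_cases i
    · show y 0 / x 0 * x 0 = y 0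
      rw [div_mul_cancel₀ _ h0]
    · show y 0 / x 0 * x 1 = y 1
      rw [div_mul_eq_mul_div, div_eq_iff h0]
      linear_combination -h'

lemma Dxy_ne_zero_of_ne {P Q : Projectivization k (Fin 2 → k)} (h : Q ≠ P) :
    Dxy P.rep Q.rep ≠ 0 := by
  intro hD
  obtain ⟨c, hc⟩ := Dxy_eq_zero P.rep_nonzero hD
  have hc0 : c ≠ 0 := by
    intro h0
    exact Q.rep_nonzero (by rw [← hc, h0, zero_smul])
  apply h
  rw [← Q.mk_rep, ← P.mk_rep]
  exact ((Projectivization.mk_eq_mk_iff' k _ _ Q.rep_nonzero P.rep_nonzero).mpr ⟨c, hc⟩)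


def Av (x : Fin 2 → k) : ℝ := ∏ v : InfinitePlace k, sv v x ^ v.mult

def Nv (x : Fin 2 → k) : ℝ :=
  ((FractionalIdeal.absNorm (FractionalIdeal.spanFinset (𝓞 k) Finset.univ x) : ℚ) : ℝ)

lemma vecHeight_def (x : Fin 2 → k) :
    vecHeight k x = (Av x / Nv x) ^ ((Module.finrank ℚ k : ℝ)⁻¹) := rfl

lemma Av_pos {x : Fin 2 → k} (hx : x ≠ 0) : 0 < Av x :=
  Finset.prod_pos fun v _ => pow_pos (sv_pos v hx) _

lemma spanFinset_ne_zero' {x : Fin 2 → k} (hx : x ≠ 0) :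
    FractionalIdeal.spanFinset (𝓞 k) Finset.univ x ≠ 0 := by
  rcases Function.ne_iff.mp hx with ⟨j, hj⟩
  exact FractionalIdeal.spanFinset_ne_zero.mpr ⟨j, Finset.mem_univ j, hj⟩

lemma Nv_pos {x : Fin 2 → k} (hx : x ≠ 0) : 0 < Nv x := by
  have h := spanFinset_ne_zero' hx
  have h1 : FractionalIdeal.absNorm (FractionalIdeal.spanFinset (𝓞 k) Finset.univ x) ≠ 0 :=
    fun h0 => h (FractionalIdeal.absNorm_eq_zero_iff.mp h0)
  have h2 := FractionalIdeal.absNorm_nonneg (FractionalIdeal.spanFinset (𝓞 k) Finset.univ x)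
  have : (0:ℚ) < FractionalIdeal.absNorm (FractionalIdeal.spanFinset (𝓞 k) Finset.univ x) :=
    lt_of_le_of_ne h2 (Ne.symm h1)
  unfold Nv
  exact_mod_cast this

lemma one_le_absNorm {M : FractionalIdeal (𝓞 k)⁰ k} (h0 : M ≠ 0) (h1 : M ≤ 1) :
    1 ≤ FractionalIdeal.absNorm M := by
  obtain ⟨I₀, rfl⟩ := FractionalIdeal.le_one_iff_exists_coeIdeal.mp h1
  rw [FractionalIdeal.coeIdeal_absNorm]
  have hI₀ : I₀ ≠ ⊥ := by
    intro hbot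
    exact h0 (by rw [hbot]; simp)
  have : Ideal.absNorm I₀ ≠ 0 := fun hn => hI₀ (Ideal.absNorm_eq_zero_iff.mp hn)
  exact_mod_cast Nat.one_le_iff_ne_zero.mpr this

lemma absNorm_le_of_le {I J : FractionalIdeal (𝓞 k)⁰ k} (hI : I ≠ 0) (h : I ≤ J) :
    FractionalIdeal.absNorm J ≤ FractionalIdeal.absNorm I := by
  have hJ : J ≠ 0 := fun h0 => hI (FractionalIdeal.le_zero_iff.mp (h0 ▸ h))
  have hM : J⁻¹ * I ≤ 1 := by
    have := (show Monotone (fun x : FractionalIdeal (𝓞 k)⁰ k => J⁻¹ * x) from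
      fun _ _ hxy => mul_le_mul_right hxy J⁻¹) h
    simp only at this
    rwa [inv_mul_cancel₀ hJ] at this
  have hJM : J * (J⁻¹ * I) = I := by
    rw [← mul_assoc, mul_inv_cancel₀ hJ, one_mul]
  have hM0 : J⁻¹ * I ≠ 0 := by
    intro h0
    apply hI
    rw [← hJM, h0, mul_zero]
  calc FractionalIdeal.absNorm J = FractionalIdeal.absNorm J * 1 := (mul_one _).symm
    _ ≤ FractionalIdeal.absNorm J * FractionalIdeal.absNorm (J⁻¹ * I) := by
        exact mul_le_mul_of_nonneg_left (one_le_absNorm hM0 hM) (FractionalIdeal.absNorm_nonneg J)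
    _ = FractionalIdeal.absNorm (J * (J⁻¹ * I)) := (_root_.map_mul FractionalIdeal.absNorm _ _).symm
    _ = FractionalIdeal.absNorm I := by rw [hJM]

lemma mem_spanFinset_self (x : Fin 2 → k) (j : Fin 2) :
    x j ∈ FractionalIdeal.spanFinset (𝓞 k) Finset.univ x := by
  rw [← FractionalIdeal.mem_coe, FractionalIdeal.spanFinset_coe]
  exact Submodule.subset_span ⟨j, Finset.mem_univ j, rfl⟩

lemma Dxy_mem (x y : Fin 2 → k) :
    Dxy x y ∈ FractionalIdeal.spanFinset (𝓞 k) Finset.univ x *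
      FractionalIdeal.spanFinset (𝓞 k) Finset.univ y := by
  unfold Dxy
  rw [← FractionalIdeal.mem_coe, FractionalIdeal.coe_mul]
  have h1 : x 0 * y 1 ∈ (FractionalIdeal.spanFinset (𝓞 k) Finset.univ x : Submodule (𝓞 k) k) *
      (FractionalIdeal.spanFinset (𝓞 k) Finset.univ y : Submodule (𝓞 k) k) :=
    Submodule.mul_mem_mul (FractionalIdeal.mem_coe.mpr (mem_spanFinset_self x 0))
      (FractionalIdeal.mem_coe.mpr (mem_spanFinset_self y 1))
  have h2 : x 1 * y 0 ∈ (FractionalIdeal.spanFinset (𝓞 k) Finset.univ x : Submodule (𝓞 k) k) *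
      (FractionalIdeal.spanFinset (𝓞 k) Finset.univ y : Submodule (𝓞 k) k) :=
    Submodule.mul_mem_mul (FractionalIdeal.mem_coe.mpr (mem_spanFinset_self x 1))
      (FractionalIdeal.mem_coe.mpr (mem_spanFinset_self y 0))
  exact Submodule.sub_mem _ h1 h2

lemma norm_ineq {x y : Fin 2 → k} (hx : x ≠ 0) (hy : y ≠ 0) (hD : Dxy x y ≠ 0) :
    Nv x * Nv y ≤ |((Algebra.norm ℚ (Dxy x y) : ℚ) : ℝ)| := by
  have hle : FractionalIdeal.spanSingleton (𝓞 k)⁰ (Dxy x y) ≤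
      FractionalIdeal.spanFinset (𝓞 k) Finset.univ x *
        FractionalIdeal.spanFinset (𝓞 k) Finset.univ y :=
    FractionalIdeal.spanSingleton_le_iff_mem.mpr (Dxy_mem x y)
  have hne : FractionalIdeal.spanSingleton (𝓞 k)⁰ (Dxy x y) ≠ 0 :=
    FractionalIdeal.spanSingleton_ne_zero_iff.mpr hD
  have h := absNorm_le_of_le hne hle
  rw [FractionalIdeal.absNorm_span_singleton, _root_.map_mul] at h
  have h' : (FractionalIdeal.absNorm (FractionalIdeal.spanFinset (𝓞 k) Finset.univ x) *
      FractionalIdeal.absNorm (FractionalIdeal.spanFinset (𝓞 k) Finset.univ y) : ℚ)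
      ≤ |Algebra.norm ℚ (Dxy x y)| := h
  unfold Nv
  rw [← Rat.cast_mul, ← Rat.cast_abs]
  exact_mod_cast h'


lemma prod_rpow_le_sum (f : InfinitePlace k → ℝ) (hf : ∀ v, 0 ≤ f v) :
    (∏ v : InfinitePlace k, f v ^ v.mult) ^ ((Module.finrank ℚ k : ℝ)⁻¹) ≤
      ∑ v : InfinitePlace k, f v := by
  have hs : 0 ≤ ∑ v : InfinitePlace k, f v := Finset.sum_nonneg fun v _ => hf v
  have h1 : (∏ v : InfinitePlace k, f v ^ v.mult) ≤
      (∑ v : InfinitePlace k, f v) ^ (Module.finrank ℚ k) := by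
    calc ∏ v : InfinitePlace k, f v ^ v.mult
        ≤ ∏ v : InfinitePlace k, (∑ w : InfinitePlace k, f w) ^ v.mult :=
          Finset.prod_le_prod (fun v _ => pow_nonneg (hf v) _)
            (fun v _ => pow_le_pow_left₀ (hf v)
              (Finset.single_le_sum (fun w _ => hf w) (Finset.mem_univ v)) _)
      _ = (∑ w : InfinitePlace k, f w) ^ (∑ v : InfinitePlace k, v.mult) :=
          Finset.prod_pow_eq_pow_sum _ _ _
      _ = _ := by rw [NumberField.InfinitePlace.sum_mult_eq]
  have hd : (0:ℝ) < (Module.finrank ℚ k : ℝ) := by exact_mod_cast Module.finrank_pos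
  have h2 := Real.rpow_le_rpow (Finset.prod_nonneg fun v _ => pow_nonneg (hf v) _) h1
    (by positivity : (0:ℝ) ≤ (Module.finrank ℚ k : ℝ)⁻¹)
  rwa [← Real.rpow_natCast (∑ v : InfinitePlace k, f v) (Module.finrank ℚ k),
    ← Real.rpow_mul hs, mul_inv_cancel₀ (ne_of_gt hd), Real.rpow_one] at h2

lemma projDist_pos {P Q : Projectivization k (Fin 2 → k)} (h : Q ≠ P) :
    0 < projDist k P Q := by
  rw [projDist_def]
  apply Finset.sum_pos _ Finset.univ_nonempty
  intro v _
  exact div_pos (NumberField.InfinitePlace.pos_iff.mpr (Dxy_ne_zero_of_ne h))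
    (mul_pos (sv_pos v P.rep_nonzero) (sv_pos v Q.rep_nonzero))

lemma projDist_nonneg (P Q : Projectivization k (Fin 2 → k)) : 0 ≤ projDist k P Q := by
  rw [projDist_def]
  exact Finset.sum_nonneg fun v _ => div_nonneg (AbsoluteValue.nonneg v.1 _)
    (mul_nonneg (sv_nonneg v _) (sv_nonneg v _))

lemma liouville (P Q : Projectivization k (Fin 2 → k)) (h : Q ≠ P) :
    (Nv P.rep / Av P.rep) ^ ((Module.finrank ℚ k : ℝ)⁻¹) ≤
      projDist k P Q * projHeight k Q := by
  have hx := P.rep_nonzero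
  have hy := Q.rep_nonzero
  have hD := Dxy_ne_zero_of_ne h
  set x := P.rep with hxdef
  set y := Q.rep with hydef
  set e := ((Module.finrank ℚ k : ℝ)⁻¹) with hedef
  have he : 0 ≤ e := inv_nonneg.mpr (Nat.cast_nonneg _)
  have h1 : (∏ v : InfinitePlace k, (v (Dxy x y) / (sv v x * sv v y)) ^ v.mult) ^ e ≤
      projDist k P Q := by
    rw [projDist_def]
    exact prod_rpow_le_sum _ (fun v => div_nonneg (AbsoluteValue.nonneg v.1 _)
      (mul_nonneg (sv_nonneg v x) (sv_nonneg v y)))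
  have h2 : (∏ v : InfinitePlace k, (v (Dxy x y) / (sv v x * sv v y)) ^ v.mult)
      = |((Algebra.norm ℚ (Dxy x y) : ℚ) : ℝ)| / (Av x * Av y) := by
    simp only [div_pow, mul_pow]
    rw [Finset.prod_div_distrib, Finset.prod_mul_distrib,
      NumberField.InfinitePlace.prod_eq_abs_norm, Rat.cast_abs]
    rfl
  rw [h2] at h1
  have hAx := Av_pos hx
  have hAy := Av_pos hy
  have hNx := Nv_pos hx
  have hNy := Nv_pos hy
  have h3 : Nv x * Nv y ≤ |((Algebra.norm ℚ (Dxy x y) : ℚ) : ℝ)| := norm_ineq hx hy hD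
  set N' := |((Algebra.norm ℚ (Dxy x y) : ℚ) : ℝ)| with hN'def
  have hH : projHeight k Q = (Av y / Nv y) ^ e := rfl
  have key1 : (N' / (Av x * Av y)) ^ e * (Av y / Nv y) ^ e = (N' / (Av x * Nv y)) ^ e := by
    rw [← Real.mul_rpow (by positivity) (by positivity)]
    congr 1
    field_simp
  have key2 : (Nv x / Av x) ^ e ≤ (N' / (Av x * Nv y)) ^ e := by
    apply Real.rpow_le_rpow (by positivity) _ he
    rw [div_le_div_iff₀ (by positivity) (by positivity)]
    calc Nv x * (Av x * Nv y) = (Nv x * Nv y) * Av x := by ring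
      _ ≤ N' * Av x := mul_le_mul_of_nonneg_right h3 (le_of_lt hAx)
      _ = N' * Av x := rfl
  calc (Nv x / Av x) ^ e ≤ (N' / (Av x * Nv y)) ^ e := key2
    _ = (N' / (Av x * Av y)) ^ e * (Av y / Nv y) ^ e := key1.symm
    _ ≤ projDist k P Q * projHeight k Q := by
        rw [hH]
        exact mul_le_mul_of_nonneg_right h1 (Real.rpow_nonneg (by positivity) e)


lemma one_le_approx (P : Projectivization k (Fin 2 → k)) (Q : ℕ → Projectivization k (Fin 2 → k))
    (hne : ∀ i, Q i ≠ P)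
    (ht : Tendsto (fun i => projDist k P (Q i)) atTop (𝓝 0))
    {a C : ℝ} (hb : ∀ i, projDist k P (Q i) ^ a * projHeight k (Q i) ≤ C) : 1 ≤ a := by
  by_contra hlt
  push_neg at hlt
  set c0 := (Nv P.rep / Av P.rep) ^ ((Module.finrank ℚ k : ℝ)⁻¹) with hc0
  have hc0pos : 0 < c0 :=
    Real.rpow_pos_of_pos (div_pos (Nv_pos P.rep_nonzero) (Av_pos P.rep_nonzero)) _
  have hdpos : ∀ i, 0 < projDist k P (Q i) := fun i => projDist_pos (hne i)
  have hlb : ∀ i, c0 * projDist k P (Q i) ^ (a - 1) ≤ C := by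
    intro i
    have hd := hdpos i
    have hL := liouville P (Q i) (hne i)
    have h5 : projDist k P (Q i) ^ (a-1) * c0 ≤
        projDist k P (Q i) ^ (a-1) * (projDist k P (Q i) * projHeight k (Q i)) :=
      mul_le_mul_of_nonneg_left hL (Real.rpow_nonneg hd.le _)
    have h6 : projDist k P (Q i) ^ (a-1) * (projDist k P (Q i) * projHeight k (Q i))
        = projDist k P (Q i) ^ a * projHeight k (Q i) := by
      rw [← mul_assoc, ← Real.rpow_add_one (ne_of_gt hd)]
      norm_num
    rw [mul_comm c0]
    exact le_trans (h6 ▸ h5) (hb i)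
  have htend : Tendsto (fun i => c0 * projDist k P (Q i) ^ (a - 1)) atTop atTop := by
    apply Tendsto.const_mul_atTop hc0pos
    have h1 : Tendsto (fun i => projDist k P (Q i)) atTop (𝓝[>] 0) :=
      tendsto_nhdsWithin_of_tendsto_nhds_of_eventually_within _ ht
        (Eventually.of_forall fun i => hdpos i)
    have h2 : Tendsto (fun i => (projDist k P (Q i))⁻¹) atTop atTop :=
      h1.inv_tendsto_nhdsGT_zero
    have h3 := (tendsto_rpow_atTop (by linarith : (0:ℝ) < 1 - a)).comp h2
    refine h3.congr fun i => ?_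
    simp only [Function.comp]
    rw [Real.inv_rpow (hdpos i).le, ← Real.rpow_neg (hdpos i).le, neg_sub]
  obtain ⟨i, hi⟩ := (htend.eventually_gt_atTop C).exists
  exact absurd (hlb i) (not_le.mpr hi)


lemma apply_le_sv (v : InfinitePlace k) (x : Fin 2 → k) (j : Fin 2) : v (x j) ≤ sv v x := by
  rw [sv_eq_max]; fin_cases j; exacts [le_max_left _ _, le_max_right _ _]

lemma spanFinset_smul (c : k) (x : Fin 2 → k) :
    FractionalIdeal.spanFinset (𝓞 k) Finset.univ (c • x) =
      FractionalIdeal.spanSingleton (𝓞 k)⁰ c * FractionalIdeal.spanFinset (𝓞 k) Finset.univ x := by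
  rw [← FractionalIdeal.coeToSubmodule_inj]
  rw [FractionalIdeal.coe_mul, FractionalIdeal.spanFinset_coe, FractionalIdeal.spanFinset_coe,
    FractionalIdeal.coe_spanSingleton, Submodule.span_mul_span]
  congr 1
  rw [Set.singleton_mul]
  simp only [Set.image_univ, Set.image_image, Set.image_univ]
  rfl

lemma vecHeight_smul {c : k} (hc : c ≠ 0) {x : Fin 2 → k} (hx : x ≠ 0) :
    vecHeight k (c • x) = vecHeight k x := by
  rw [vecHeight_def, vecHeight_def]
  congr 1
  have hAv : Av (c • x) = |((Algebra.norm ℚ c : ℚ) : ℝ)| * Av x := by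
    unfold Av
    simp only [sv_smul, mul_pow]
    rw [Finset.prod_mul_distrib, NumberField.InfinitePlace.prod_eq_abs_norm, Rat.cast_abs]
  have hNv : Nv (c • x) = |((Algebra.norm ℚ c : ℚ) : ℝ)| * Nv x := by
    unfold Nv
    rw [spanFinset_smul, _root_.map_mul, FractionalIdeal.absNorm_span_singleton]
    push_cast
    ring
  have hnc : (0:ℝ) < |((Algebra.norm ℚ c : ℚ) : ℝ)| := by
    rw [abs_pos]
    exact_mod_cast (Algebra.norm_ne_zero_iff.mpr hc)
  rw [hAv, hNv, mul_div_mul_left _ _ (ne_of_gt hnc)]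

lemma projHeight_mk {z : Fin 2 → k} (hz : z ≠ 0) :
    projHeight k (Projectivization.mk k z hz) = vecHeight k z := by
  obtain ⟨a, ha⟩ := Projectivization.exists_smul_eq_mk_rep k z hz
  unfold projHeight
  rw [← ha, Units.smul_def]
  exact vecHeight_smul a.ne_zero hz

lemma projDist_mk (P : Projectivization k (Fin 2 → k)) {z : Fin 2 → k} (hz : z ≠ 0) :
    projDist k P (Projectivization.mk k z hz) =
      ∑ v : InfinitePlace k, v (Dxy P.rep z) / (sv v P.rep * sv v z) := by
  obtain ⟨a, ha⟩ := Projectivization.exists_smul_eq_mk_rep k z hz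
  rw [projDist_def]
  refine Finset.sum_congr rfl fun v _ => ?_
  rw [← ha, Units.smul_def]
  have hDs : Dxy P.rep ((a:k) • z) = (a:k) * Dxy P.rep z := by
    unfold Dxy
    simp only [Pi.smul_apply, smul_eq_mul]
    ring
  have hva : 0 < v (a:k) := NumberField.InfinitePlace.pos_iff.mpr a.ne_zero
  rw [hDs, sv_smul, _root_.map_mul,
    show sv v P.rep * (v (a:k) * sv v z) = v (a:k) * (sv v P.rep * sv v z) by ring,
    mul_div_mul_left _ _ (ne_of_gt hva)]

lemma infinitePlace_natCast (v : InfinitePlace k) (n : ℕ) : v ((n : ℕ) : k) = n := by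
  rw [← NumberField.InfinitePlace.norm_embedding_eq, map_natCast, Complex.norm_natCast]


set_option maxHeartbeats 2000000 in
lemma dirichlet (P : Projectivization k (Fin 2 → k)) :
    ∃ Q : ℕ → Projectivization k (Fin 2 → k),
      (∀ i, Q i ≠ P) ∧
      Tendsto (fun i => projDist k P (Q i)) atTop (𝓝 0) ∧
      ∃ C : ℝ, ∀ i, projDist k P (Q i) * projHeight k (Q i) ≤ C := by
  classical
  set x := P.rep with hxdef
  have hx : x ≠ 0 := P.rep_nonzero
  -- choose the auxiliary vector e
  obtain ⟨e, he1, hD0⟩ : ∃ e : Fin 2 → k,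
      (∀ v : InfinitePlace k, sv v e = 1) ∧ Dxy x e ≠ 0 := by
    by_cases h0 : x 0 = 0
    · have h1 : x 1 ≠ 0 := by
        intro h1; apply hx; funext i; fin_cases i; exacts [h0, h1]
      refine ⟨![1, 0], fun v => ?_, ?_⟩
      · rw [sv_eq_max]; simp
      · unfold Dxy; simp [h1]
    · refine ⟨![0, 1], fun v => ?_, ?_⟩
      · rw [sv_eq_max]; simp
      · unfold Dxy; simp [h0]
  set D0 := Dxy x e with hD0def
  -- minimum of sv v x
  have hne : (Finset.univ : Finset (InfinitePlace k)).Nonempty := Finset.univ_nonempty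
  set m := Finset.inf' Finset.univ hne (fun v : InfinitePlace k => sv v x) with hmdef
  have hm : 0 < m := (Finset.lt_inf'_iff hne).mpr fun v _ => sv_pos v hx
  have hm_le : ∀ v : InfinitePlace k, m ≤ sv v x := fun v => Finset.inf'_le _ (Finset.mem_univ v)
  obtain ⟨N0, hN0⟩ := exists_nat_ge (2 / m)
  -- the sequence of vectors
  set c : ℕ → ℝ := fun i => ((i + N0 + 1 : ℕ) : ℝ) with hcdef
  have hc1 : ∀ i, (1:ℝ) ≤ c i := fun i => by
    simp only [hcdef]; exact_mod_cast Nat.succ_le_succ (Nat.zero_le _)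
  have hcpos : ∀ i, (0:ℝ) < c i := fun i => lt_of_lt_of_le one_pos (hc1 i)
  have hc2m : ∀ i, 2 / m ≤ c i := fun i => le_trans hN0 (by
    simp only [hcdef]; exact_mod_cast Nat.le_add_left N0 (i+1) |>.trans (by omega))
  set y : ℕ → (Fin 2 → k) := fun i => (((i + N0 + 1 : ℕ) : k)) • x + e with hydef
  have hDy : ∀ i, Dxy x (y i) = D0 := by
    intro i
    simp only [hydef, hD0def]
    unfold Dxy
    simp only [Pi.add_apply, Pi.smul_apply, smul_eq_mul]
    ring
  have hy0 : ∀ i, y i ≠ 0 := by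
    intro i h0
    apply hD0
    rw [← hDy i, h0]
    unfold Dxy
    simp
  -- sv bounds
  have hsv_ub : ∀ i, ∀ v : InfinitePlace k, sv v (y i) ≤ c i * (sv v x + 1) := by
    intro i v
    rw [sv_eq_max]
    have hb : ∀ j : Fin 2, v ((y i) j) ≤ c i * (sv v x + 1) := by
      intro j
      have h1 : v ((y i) j) ≤ v (((i + N0 + 1 : ℕ) : k) * x j) + v (e j) := by
        simp only [hydef, Pi.add_apply, Pi.smul_apply, smul_eq_mul]
        exact AbsoluteValue.add_le v.1 _ _
      rw [_root_.map_mul, infinitePlace_natCast] at h1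
      have h2 : v (x j) ≤ sv v x := apply_le_sv v x j
      have h3 : v (e j) ≤ 1 := (apply_le_sv v e j).trans_eq (he1 v)
      have h4 : (1:ℝ) ≤ c i := hc1 i
      have h5 : (0:ℝ) ≤ v (x j) := AbsoluteValue.nonneg v.1 _
      nlinarith [hcpos i]
    exact max_le (hb 0) (hb 1)
  have hsv_lb : ∀ i, ∀ v : InfinitePlace k, c i / 2 * sv v x ≤ sv v (y i) := by
    intro i v
    -- pick the coordinate achieving the max
    obtain ⟨j, hj⟩ : ∃ j : Fin 2, v (x j) = sv v x := by
      rw [sv_eq_max]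
      rcases max_cases (v (x 0)) (v (x 1)) with ⟨h, _⟩ | ⟨h, _⟩
      · exact ⟨0, h.symm⟩
      · exact ⟨1, h.symm⟩
    have h1 : v (((i + N0 + 1 : ℕ) : k) * x j) ≤ v ((y i) j) + v (e j) := by
      have := AbsoluteValue.add_le v.1 ((y i) j) (-(e j))
      simp only [hydef, Pi.add_apply, Pi.smul_apply, smul_eq_mul] at this ⊢
      rw [add_neg_cancel_right] at this
      rw [AbsoluteValue.map_neg] at this
      exact this
    rw [_root_.map_mul, infinitePlace_natCast, hj] at h1
    have h2 : v ((y i) j) ≤ sv v (y i) := apply_le_sv v (y i) j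
    have h3 : v (e j) ≤ 1 := (apply_le_sv v e j).trans_eq (he1 v)
    have h4 : 2 / m ≤ c i := hc2m i
    have h5 : m ≤ sv v x := hm_le v
    have hcm : 2 ≤ c i * m := by
      rw [div_le_iff₀ hm] at h4
      linarith
    -- c*sv - 1 ≥ (c/2)*sv  since (c/2)*sv ≥ (c/2)*m ≥ 1
    have h6 : (1:ℝ) ≤ c i / 2 * sv v x := by nlinarith [hcpos i]
    nlinarith [hcpos i]
  -- the sequence of points
  refine ⟨fun i => Projectivization.mk k (y i) (hy0 i), ?_, ?_, ?_⟩
  · intro i hQ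
    rw [← P.mk_rep] at hQ
    obtain ⟨a, ha⟩ := (Projectivization.mk_eq_mk_iff' k _ _ (hy0 i) P.rep_nonzero).mp hQ
    apply hD0
    rw [← hDy i, ← ha]
    unfold Dxy
    simp only [Pi.smul_apply, smul_eq_mul]
    ring
  · -- tendsto
    set C1 : ℝ := ∑ v : InfinitePlace k, 2 * v D0 / (sv v x)^2 with hC1def
    have hterm : ∀ i, projDist k P (Projectivization.mk k (y i) (hy0 i)) ≤ C1 / c i := by
      intro i
      rw [projDist_mk P (hy0 i)]
      have hbd : ∀ v : InfinitePlace k,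
          v (Dxy x (y i)) / (sv v x * sv v (y i)) ≤ (1 / c i) * (2 * v D0 / (sv v x)^2) := by
        intro v
        rw [hDy i]
        have hsx := sv_pos v hx
        have hden1 : (0:ℝ) < sv v x * (c i / 2 * sv v x) := by positivity
        have hle : sv v x * (c i / 2 * sv v x) ≤ sv v x * sv v (y i) :=
          mul_le_mul_of_nonneg_left (hsv_lb i v) hsx.le
        calc v D0 / (sv v x * sv v (y i)) ≤ v D0 / (sv v x * (c i / 2 * sv v x)) :=
              div_le_div_of_nonneg_left (AbsoluteValue.nonneg v.1 _) hden1 hle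
          _ = (1 / c i) * (2 * v D0 / (sv v x)^2) := by
              field_simp
      calc (∑ v : InfinitePlace k, v (Dxy x (y i)) / (sv v x * sv v (y i)))
          ≤ ∑ v : InfinitePlace k, (1 / c i) * (2 * v D0 / (sv v x)^2) :=
            Finset.sum_le_sum fun v _ => hbd v
        _ = C1 / c i := by rw [← Finset.mul_sum, hC1def]; field_simp
    have hcast : Tendsto c atTop atTop := by
      apply tendsto_natCast_atTop_atTop.comp
      exact tendsto_add_atTop_nat (N0 + 1)
    have hC1tend : Tendsto (fun i => C1 / c i) atTop (𝓝 0) :=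
      Tendsto.div_atTop tendsto_const_nhds hcast
    exact tendsto_of_tendsto_of_tendsto_of_le_of_le tendsto_const_nhds hC1tend
      (fun i => projDist_nonneg P _) hterm
  · -- bounded dist * height
    set d := Module.finrank ℚ k with hddef
    set ee : ℝ := ((d : ℝ))⁻¹ with heedef
    have hd : (0:ℝ) < (d:ℝ) := by exact_mod_cast Module.finrank_pos
    set C1 : ℝ := ∑ v : InfinitePlace k, 2 * v D0 / (sv v x)^2 with hC1def
    have hC1nn : 0 ≤ C1 := Finset.sum_nonneg fun v _ => by positivity
    set C2 : ℝ := ∏ v : InfinitePlace k, (sv v x + 1) ^ v.mult with hC2def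
    have hC2pos : 0 < C2 := Finset.prod_pos fun v _ => pow_pos (by linarith [sv_pos v hx]) _
    set g : Fin 4 → k := ![x 0, x 1, e 0, e 1] with hgdef
    set J0 := FractionalIdeal.spanFinset (𝓞 k) Finset.univ g with hJ0def
    have hJ0 : J0 ≠ 0 := by
      rcases Function.ne_iff.mp hx with ⟨j, hj⟩
      apply FractionalIdeal.spanFinset_ne_zero.mpr
      fin_cases j
      · exact ⟨0, Finset.mem_univ _, hj⟩
      · exact ⟨1, Finset.mem_univ _, hj⟩
    set NJ : ℝ := ((FractionalIdeal.absNorm J0 : ℚ) : ℝ) with hNJdef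
    have hNJ : 0 < NJ := by
      have h1 : FractionalIdeal.absNorm J0 ≠ 0 :=
        fun h0 => hJ0 (FractionalIdeal.absNorm_eq_zero_iff.mp h0)
      have h2 := FractionalIdeal.absNorm_nonneg J0
      have : (0:ℚ) < FractionalIdeal.absNorm J0 := lt_of_le_of_ne h2 (Ne.symm h1)
      simp only [hNJdef]
      exact_mod_cast this
    -- span of y i is contained in J0
    have hNv_lb : ∀ i, NJ ≤ Nv (y i) := by
      intro i
      have hle : FractionalIdeal.spanFinset (𝓞 k) Finset.univ (y i) ≤ J0 := by
        rw [← FractionalIdeal.coe_le_coe, FractionalIdeal.spanFinset_coe]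
        rw [Submodule.span_le]
        rintro _ ⟨j, -, rfl⟩
        have hgj : ∀ j' : Fin 4, g j' ∈ (J0 : Submodule (𝓞 k) k) := by
          intro j'
          rw [hJ0def, FractionalIdeal.spanFinset_coe]
          exact Submodule.subset_span ⟨j', by simp, rfl⟩
        have hx0 : x 0 ∈ (J0 : Submodule (𝓞 k) k) := hgj 0
        have hx1 : x 1 ∈ (J0 : Submodule (𝓞 k) k) := hgj 1
        have he0 : e 0 ∈ (J0 : Submodule (𝓞 k) k) := hgj 2
        have he1' : e 1 ∈ (J0 : Submodule (𝓞 k) k) := hgj 3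
        have hsm : ∀ z : k, z ∈ (J0 : Submodule (𝓞 k) k) →
            (((i + N0 + 1 : ℕ) : k)) * z ∈ (J0 : Submodule (𝓞 k) k) := by
          intro z hz
          have := Submodule.smul_mem (J0 : Submodule (𝓞 k) k) ((i + N0 + 1 : ℕ) : 𝓞 k) hz
          rwa [Algebra.smul_def, map_natCast] at this
        have : (y i) j ∈ (J0 : Submodule (𝓞 k) k) := by
          simp only [hydef, Pi.add_apply, Pi.smul_apply, smul_eq_mul]
          fin_cases j
          · exact Submodule.add_mem _ (hsm _ hx0) he0
          · exact Submodule.add_mem _ (hsm _ hx1) he1'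
        exact this
      have hne0 : FractionalIdeal.spanFinset (𝓞 k) Finset.univ (y i) ≠ 0 :=
        spanFinset_ne_zero' (hy0 i)
      have := absNorm_le_of_le hne0 hle
      simp only [hNJdef]
      unfold Nv
      exact_mod_cast this
    -- Av upper bound
    have hAv_ub : ∀ i, Av (y i) ≤ (c i) ^ d * C2 := by
      intro i
      unfold Av
      calc ∏ v : InfinitePlace k, sv v (y i) ^ v.mult
          ≤ ∏ v : InfinitePlace k, (c i * (sv v x + 1)) ^ v.mult :=
            Finset.prod_le_prod (fun v _ => pow_nonneg (sv_nonneg v _) _)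
              (fun v _ => pow_le_pow_left₀ (sv_nonneg v _) (hsv_ub i v) _)
        _ = (c i) ^ d * C2 := by
            simp only [mul_pow]
            rw [Finset.prod_mul_distrib, Finset.prod_pow_eq_pow_sum,
              NumberField.InfinitePlace.sum_mult_eq, hC2def]
    -- height bound
    have hH_ub : ∀ i, projHeight k (Projectivization.mk k (y i) (hy0 i)) ≤
        c i * (C2 / NJ) ^ ee := by
      intro i
      rw [projHeight_mk (hy0 i), vecHeight_def]
      have h1 : Av (y i) / Nv (y i) ≤ (c i) ^ d * C2 / NJ := by
        apply div_le_div₀ (by positivity) (hAv_ub i) hNJ (hNv_lb i)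
      have h2 : (Av (y i) / Nv (y i)) ^ ee ≤ ((c i) ^ d * C2 / NJ) ^ ee := by
        apply Real.rpow_le_rpow _ h1 (by positivity)
        have := Nv_pos (hy0 i)
        have := Av_pos (hy0 i)
        positivity
      refine h2.trans (le_of_eq ?_)
      rw [mul_div_assoc, Real.mul_rpow (by positivity) (by positivity),
        ← Real.rpow_natCast (c i) d, ← Real.rpow_mul (hcpos i).le,
        mul_inv_cancel₀ (ne_of_gt hd), Real.rpow_one]
    -- dist bound (again)
    have hterm : ∀ i, projDist k P (Projectivization.mk k (y i) (hy0 i)) ≤ C1 / c i := by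
      intro i
      rw [projDist_mk P (hy0 i)]
      have hbd : ∀ v : InfinitePlace k,
          v (Dxy x (y i)) / (sv v x * sv v (y i)) ≤ (1 / c i) * (2 * v D0 / (sv v x)^2) := by
        intro v
        rw [hDy i]
        have hsx := sv_pos v hx
        have hden1 : (0:ℝ) < sv v x * (c i / 2 * sv v x) := by positivity
        have hle : sv v x * (c i / 2 * sv v x) ≤ sv v x * sv v (y i) :=
          mul_le_mul_of_nonneg_left (hsv_lb i v) hsx.le
        calc v D0 / (sv v x * sv v (y i)) ≤ v D0 / (sv v x * (c i / 2 * sv v x)) :=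
              div_le_div_of_nonneg_left (AbsoluteValue.nonneg v.1 _) hden1 hle
          _ = (1 / c i) * (2 * v D0 / (sv v x)^2) := by
              field_simp
      calc (∑ v : InfinitePlace k, v (Dxy x (y i)) / (sv v x * sv v (y i)))
          ≤ ∑ v : InfinitePlace k, (1 / c i) * (2 * v D0 / (sv v x)^2) :=
            Finset.sum_le_sum fun v _ => hbd v
        _ = C1 / c i := by rw [← Finset.mul_sum, hC1def]; field_simp
    refine ⟨C1 * (C2 / NJ) ^ ee, fun i => ?_⟩
    have hHnn : 0 ≤ projHeight k (Projectivization.mk k (y i) (hy0 i)) := by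
      rw [projHeight_mk (hy0 i), vecHeight_def]
      exact Real.rpow_nonneg (div_nonneg (Av_pos (hy0 i)).le (Nv_pos (hy0 i)).le) _
    calc projDist k P (Projectivization.mk k (y i) (hy0 i)) *
          projHeight k (Projectivization.mk k (y i) (hy0 i))
        ≤ (C1 / c i) * (c i * (C2 / NJ) ^ ee) :=
          mul_le_mul (hterm i) (hH_ub i) hHnn (div_nonneg hC1nn (hcpos i).le)
      _ = C1 * (C2 / NJ) ^ ee := by
          field_simp [(hcpos i).ne']
  
end S2Aux

/-- There is a sequence `Qᵢ → P` in `ℙ¹(k) ∖ {P}` with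
`dist(P,Qᵢ) · H(Qᵢ)` bounded; consequently the approximation constant of `P`
on `ℙ¹(k)` exists and equals `1`. -/
theorem statement2 (P : Projectivization k (Fin 2 → k)) :
    (∃ Q : ℕ → Projectivization k (Fin 2 → k),
      (∀ i, Q i ≠ P) ∧
      Tendsto (fun i => projDist k P (Q i)) atTop (𝓝 0) ∧
      ∃ C : ℝ, ∀ i, projDist k P (Q i) * projHeight k (Q i) ≤ C) ∧
    IsPointApproxConst (projDist k) (projHeight k) Set.univ P 1 := by
  obtain ⟨Q, hQne, hQt, C, hC⟩ := S2Aux.dirichlet P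
  have hApprox : IsApproxConst (projDist k) (projHeight k) P Q 1 := by
    constructor
    · refine ⟨zero_le_one, C, fun i => ?_⟩
      rw [Real.rpow_one]
      exact hC i
    · rintro a ⟨ha0, C', hC'⟩
      exact S2Aux.one_le_approx P Q hQne hQt hC'
  refine ⟨⟨Q, hQne, hQt, C, hC⟩, ?_, ?_⟩
  · exact ⟨Q, fun i => Set.mem_univ _, ⟨hQne, hQt⟩, hApprox⟩
  · rintro a ⟨Q', hmem, ⟨hne', ht'⟩, ⟨⟨ha0, C', hC'⟩, hlb⟩⟩
    exact S2Aux.one_le_approx P Q' hne' ht' hC'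


end
end

section
/- Let P = [0 : 0 : 1] ∈ ℙ²(ℚ). There exists a sequence (Q_n) in ℙ²(ℚ) ∖ {P} with dist(P, Q_n) → 0 such that for every ε > 0 one has limsup_n dist(P, Q_n)^{1+ε} · H(Q_n) < ∞, while limsup_n dist(P, Q_n) · H(Q_n) = ∞. In particular, the set of exponents α ≥ 0 with limsup_n dist(P, Q_n)^α · H(Q_n) < ∞ is nonempty but has no least element, so the sequence (Q_n) has no approximation constant. -/
open NumberField Filter Topology

noncomputable section

variable (k : Type*) [Field k] [NumberField k]

/-- The point `[0 : 0 : 1]` of `ℙ²(ℚ)`. -/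
def basePoint : Projectivization ℚ (Fin 3 → ℚ) :=
  Projectivization.mk ℚ ![0, 0, 1] (by
    intro h
    simpa using congrFun h 2)


/-! ### Auxiliary lemmas -/

open scoped nonZeroDivisors

instance : Subsingleton (InfinitePlace ℚ) := ⟨fun v w => by
  rw [← v.mk_embedding, ← w.mk_embedding]; congr 1; exact Subsingleton.elim _ _⟩

lemma myPlaceApply (v : InfinitePlace ℚ) (q : ℚ) : v q = |(q : ℝ)| := by
  rw [← NumberField.InfinitePlace.norm_embedding_eq, eq_ratCast (v.embedding) q,
    Complex.norm_ratCast]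

lemma myMultEq (v : InfinitePlace ℚ) : v.mult = 1 := by
  have := InfinitePlace.sum_mult_eq (K := ℚ)
  rwa [Fintype.sum_subsingleton _ v, Module.finrank_self] at this

lemma mySupEq {ι : Type*} [Nonempty ι] [Finite ι] (f : ι → ℝ) (a : ℝ)
    (h1 : ∀ p, f p ≤ a) (h2 : ∃ p, f p = a) : (⨆ p, f p) = a := by
  obtain ⟨p, hp⟩ := h2
  exact le_antisymm (ciSup_le h1) (hp ▸ le_ciSup (Set.Finite.bddAbove (Set.finite_range f)) p)

lemma myRepSpec {m : ℕ} (v : Fin m → ℚ) (hv : v ≠ 0) :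
    ∃ c : ℚ, c ≠ 0 ∧ (Projectivization.mk ℚ v hv).rep = c • v := by
  have h := Projectivization.mk_rep (Projectivization.mk ℚ v hv)
  rw [Projectivization.mk_eq_mk_iff] at h
  obtain ⟨a, ha⟩ := h
  exact ⟨a, a.ne_zero, ha.symm⟩

lemma mySpanEq (c : ℚ) (A B : ℕ) (u v : ℤ) (h : u * A + v * B = 1) :
    FractionalIdeal.spanFinset (𝓞 ℚ) Finset.univ (c • ![(A:ℚ), 0, (B:ℚ)]) =
      FractionalIdeal.spanSingleton (𝓞 ℚ)⁰ c := by
  rw [← FractionalIdeal.coeToSubmodule_inj, FractionalIdeal.spanFinset_coe,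
    FractionalIdeal.coe_spanSingleton]
  apply le_antisymm
  · rw [Submodule.span_le]
    rintro x ⟨j, -, rfl⟩
    fin_cases j
    · exact Submodule.mem_span_singleton.mpr ⟨(A : 𝓞 ℚ), by
        simp [Algebra.smul_def, mul_comm]⟩
    · simp
    · exact Submodule.mem_span_singleton.mpr ⟨(B : 𝓞 ℚ), by
        simp [Algebra.smul_def, mul_comm]⟩
  · rw [Submodule.span_le, Set.singleton_subset_iff]
    have h0 : (c * A) ∈ Submodule.span (𝓞 ℚ)
        ((c • ![(A:ℚ), 0, (B:ℚ)]) '' (Finset.univ : Finset (Fin 3))) :=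
      Submodule.subset_span ⟨(0 : Fin 3), Finset.mem_coe.mpr (Finset.mem_univ _), by simp⟩
    have h2 : (c * B) ∈ Submodule.span (𝓞 ℚ)
        ((c • ![(A:ℚ), 0, (B:ℚ)]) '' (Finset.univ : Finset (Fin 3))) :=
      Submodule.subset_span ⟨(2 : Fin 3), Finset.mem_coe.mpr (Finset.mem_univ _), by simp⟩
    have key := Submodule.add_mem _ (Submodule.smul_mem _ ((u : 𝓞 ℚ)) h0)
      (Submodule.smul_mem _ ((v : 𝓞 ℚ)) h2)
    have heq : ((u : 𝓞 ℚ)) • (c * (A:ℚ)) + ((v : 𝓞 ℚ)) • (c * (B:ℚ)) = c := by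
      have hq : (u:ℚ) * A + (v:ℚ) * B = 1 := by exact_mod_cast h
      simp only [Algebra.smul_def, map_intCast]
      calc (u:ℚ) * (c * A) + (v:ℚ) * (c * B) = c * ((u:ℚ) * A + (v:ℚ) * B) := by ring
        _ = c := by rw [hq, mul_one]
    rwa [heq] at key

lemma myVecHeightEq (c : ℚ) (hc : c ≠ 0) (A B : ℕ) (hAB : A ≤ B) (u v : ℤ)
    (h : u * A + v * B = 1) :
    vecHeight ℚ (c • ![(A:ℚ), 0, (B:ℚ)]) = (B : ℝ) := by
  have v₀ : InfinitePlace ℚ := (Classical.arbitrary _)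
  have hsup : (⨆ j, v₀ ((c • ![(A:ℚ), 0, (B:ℚ)]) j)) = |(c:ℝ)| * B := by
    apply mySupEq
    · intro j
      fin_cases j
      · show v₀ ((c • ![(A:ℚ), 0, (B:ℚ)]) 0) ≤ _
        rw [Pi.smul_apply, smul_eq_mul, Matrix.cons_val_zero, myPlaceApply]
        push_cast
        rw [abs_mul, Nat.abs_cast]
        exact mul_le_mul_of_nonneg_left (by exact_mod_cast hAB) (abs_nonneg _)
      · show v₀ ((c • ![(A:ℚ), 0, (B:ℚ)]) 1) ≤ _
        rw [Pi.smul_apply, smul_eq_mul, Matrix.cons_val_one, Matrix.cons_val_zero, mul_zero,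
          myPlaceApply]
        simpa using by positivity
      · show v₀ ((c • ![(A:ℚ), 0, (B:ℚ)]) 2) ≤ _
        rw [Pi.smul_apply, smul_eq_mul, Matrix.cons_val_two, Matrix.tail_cons, Matrix.head_cons,
          myPlaceApply]
        push_cast
        rw [abs_mul, Nat.abs_cast]
    · refine ⟨2, ?_⟩
      rw [Pi.smul_apply, smul_eq_mul, Matrix.cons_val_two, Matrix.tail_cons, Matrix.head_cons,
        myPlaceApply]
      push_cast
      rw [abs_mul, Nat.abs_cast]
  have hprod : (∏ w : InfinitePlace ℚ, (⨆ j, w ((c • ![(A:ℚ), 0, (B:ℚ)]) j)) ^ w.mult)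
      = |(c:ℝ)| * B := by
    rw [Fintype.prod_subsingleton _ v₀, myMultEq, pow_one, hsup]
  have hnorm : ((FractionalIdeal.absNorm
      (FractionalIdeal.spanFinset (𝓞 ℚ) Finset.univ (c • ![(A:ℚ), 0, (B:ℚ)])) : ℚ) : ℝ)
      = |(c:ℝ)| := by
    rw [mySpanEq c A B u v h, FractionalIdeal.absNorm_span_singleton]
    have hcn : Algebra.norm ℚ c = c := by
      simpa using Algebra.norm_algebraMap (K := ℚ) (L := ℚ) c
    rw [hcn]
    push_cast
    rfl
  rw [vecHeight, hprod, hnorm, Module.finrank_self, Nat.cast_one, inv_one, Real.rpow_one,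
    mul_comm, mul_div_assoc, div_self (by simpa using hc), mul_one]

lemma myProjDistEq (A B : ℕ) (hA : 0 < A) (hAB : A ≤ B)
    (h1 : (![(0:ℚ),0,1]) ≠ 0) (h2 : ![(A:ℚ),0,(B:ℚ)] ≠ 0) :
    projDist ℚ (Projectivization.mk ℚ ![0,0,1] h1)
      (Projectivization.mk ℚ ![(A:ℚ),0,(B:ℚ)] h2) = (A:ℝ)/(B:ℝ) := by
  obtain ⟨c', hc'0, hc'⟩ := myRepSpec ![(0:ℚ),0,1] h1
  obtain ⟨c, hc0, hc⟩ := myRepSpec ![(A:ℚ),0,(B:ℚ)] h2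
  have v₀ : InfinitePlace ℚ := Classical.arbitrary _
  rw [projDist, Fintype.sum_subsingleton _ v₀]
  rw [hc', hc]
  have hS1 : (⨆ p : Fin 3 × Fin 3, v₀ ((c' • ![(0:ℚ),0,1]) p.1 * (c • ![(A:ℚ),0,(B:ℚ)]) p.2
      - (c' • ![(0:ℚ),0,1]) p.2 * (c • ![(A:ℚ),0,(B:ℚ)]) p.1)) = |(c':ℝ)| * |(c:ℝ)| * A := by
    apply mySupEq
    · rintro ⟨i, j⟩
      fin_cases i <;> fin_cases j <;>
        simp [myPlaceApply, abs_mul] <;> push_cast <;>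
        first
          | positivity
          | exact le_of_eq (by ring)
    · refine ⟨(⟨2, ⟨0, by norm_num⟩⟩ : Fin 3 × Fin 3), ?_⟩
      simp [myPlaceApply, abs_mul]
      push_cast
      ring
  have hS2 : (⨆ j, v₀ ((c' • ![(0:ℚ),0,1]) j)) = |(c':ℝ)| := by
    apply mySupEq
    · intro j
      fin_cases j <;> simp [myPlaceApply, abs_mul] <;> positivity
    · exact ⟨2, by simp [myPlaceApply]⟩
  have hS3 : (⨆ j, v₀ ((c • ![(A:ℚ),0,(B:ℚ)]) j)) = |(c:ℝ)| * B := by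
    apply mySupEq
    · intro j
      fin_cases j
      · simp [myPlaceApply, abs_mul]
        exact mul_le_mul_of_nonneg_left (by exact_mod_cast hAB) (abs_nonneg _)
      · simp [myPlaceApply]
        try positivity
      · simp [myPlaceApply, abs_mul]
    · exact ⟨2, by simp [myPlaceApply, abs_mul]⟩
  rw [hS1, hS2, hS3]
  have hc'r : |(c':ℝ)| ≠ 0 := abs_ne_zero.mpr (by exact_mod_cast hc'0)
  have hcr : |(c:ℝ)| ≠ 0 := abs_ne_zero.mpr (by exact_mod_cast hc0)
  have hBr : (B:ℝ) ≠ 0 := Nat.cast_ne_zero.mpr (lt_of_lt_of_le hA hAB).ne'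
  field_simp

/-- The numerator of the approximating sequence. -/
def seqA (n : ℕ) : ℕ := n + 2

/-- The denominator of the approximating sequence. -/
def seqB (n : ℕ) : ℕ := (n + 2) ^ (n + 2) + 1

lemma seqA_le_seqB (n : ℕ) : seqA n ≤ seqB n := by
  have : n + 2 ≤ (n + 2) ^ (n + 2) := Nat.le_self_pow (by omega) _
  simp only [seqA, seqB]
  omega

lemma seq_bezout (n : ℕ) :
    (-(((n:ℤ)+2) ^ (n+1))) * (seqA n : ℤ) + 1 * (seqB n : ℤ) = 1 := by
  simp only [seqA, seqB]
  push_cast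
  ring

/-- The coordinate vector of the approximating sequence. -/
def seqVec (n : ℕ) : Fin 3 → ℚ := ![(seqA n : ℚ), 0, (seqB n : ℚ)]

lemma seqVec_ne_zero (n : ℕ) : seqVec n ≠ 0 := by
  intro h
  have := congrFun h 2
  simp [seqVec, seqB] at this
  nlinarith [pow_pos (show (0:ℚ) < (n:ℚ) + 2 by positivity) (n+2)]

/-- The approximating sequence of points in `ℙ²(ℚ)`. -/
def seqQ (n : ℕ) : Projectivization ℚ (Fin 3 → ℚ) :=
  Projectivization.mk ℚ (seqVec n) (seqVec_ne_zero n)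

lemma seqQ_dist (n : ℕ) :
    projDist ℚ basePoint (seqQ n) = (seqA n : ℝ) / (seqB n : ℝ) :=
  myProjDistEq (seqA n) (seqB n) (by simp [seqA]) (seqA_le_seqB n) _ _

lemma seqQ_height (n : ℕ) : projHeight ℚ (seqQ n) = (seqB n : ℝ) := by
  obtain ⟨c, hc0, hc⟩ := myRepSpec (seqVec n) (seqVec_ne_zero n)
  rw [projHeight, show (seqQ n).rep = c • ![(seqA n : ℚ), 0, (seqB n : ℚ)] from hc]
  exact myVecHeightEq c hc0 _ _ (seqA_le_seqB n) _ _ (seq_bezout n)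

lemma seqQ_ne (n : ℕ) : seqQ n ≠ basePoint := by
  intro h
  rw [seqQ, basePoint, Projectivization.mk_eq_mk_iff] at h
  obtain ⟨a, ha⟩ := h
  have := congrFun ha 0
  simp [seqVec, seqA] at this
  have hn : (0:ℚ) ≤ (n:ℚ) := Nat.cast_nonneg n
  linarith

lemma myBddHelper (f : ℕ → ℝ) (N : ℕ) (h : ∀ n, N ≤ n → f n ≤ 1) : ∃ C, ∀ n, f n ≤ C := by
  refine ⟨1 + ∑ i ∈ Finset.range N, |f i|, fun n => ?_⟩
  rcases le_or_gt N n with hn | hn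
  · have h0 : (0:ℝ) ≤ ∑ i ∈ Finset.range N, |f i| :=
      Finset.sum_nonneg fun i _ => abs_nonneg _
    linarith [h n hn]
  · have hs : |f n| ≤ ∑ i ∈ Finset.range N, |f i| :=
      Finset.single_le_sum (fun i _ => abs_nonneg (f i)) (Finset.mem_range.mpr hn)
    linarith [le_abs_self (f n)]

lemma seq_dist_pos (n : ℕ) : 0 < (seqA n : ℝ) / (seqB n : ℝ) := by
  apply div_pos <;> · simp only [seqA, seqB]; positivity

lemma seq_dist_le_one (n : ℕ) : (seqA n : ℝ) / (seqB n : ℝ) ≤ 1 := by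
  rw [div_le_one (by simp only [seqB]; positivity)]
  exact_mod_cast seqA_le_seqB n

lemma seq_tendsto : Tendsto (fun n => (seqA n : ℝ) / (seqB n : ℝ)) atTop (𝓝 0) := by
  apply squeeze_zero (fun n => (seq_dist_pos n).le)
    (g := fun n : ℕ => 1 / ((n : ℝ) + 1))
  · intro n
    rw [div_le_div_iff₀ (by simp only [seqB]; positivity) (by positivity)]
    have key : (seqA n) * (n + 1) ≤ 1 * seqB n := by
      simp only [seqA, seqB, one_mul]
      have h1 : (n + 2) * (n + 1) ≤ (n + 2) * (n + 2) := by nlinarith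
      have h2 : (n + 2) * (n + 2) ≤ (n + 2) ^ (n + 2) := by
        calc (n + 2) * (n + 2) = (n + 2) ^ 2 := (sq (n+2)).symm
          _ ≤ (n + 2) ^ (n + 2) := Nat.pow_le_pow_right (by omega) (by omega)
      omega
    exact_mod_cast key
  · exact tendsto_one_div_add_atTop_nhds_zero_nat

lemma seq_eps_bound {ε : ℝ} (hε : 0 < ε) :
    ∃ C : ℝ, ∀ n, ((seqA n : ℝ) / (seqB n : ℝ)) ^ ((1:ℝ) + ε) * (seqB n : ℝ) ≤ C := by
  apply myBddHelper _ (⌈1/ε⌉₊ + 1)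
  intro n hn
  set a : ℝ := (n:ℝ) + 2 with ha_def
  have ha1 : (1:ℝ) ≤ a := by simp only [ha_def]; linarith [Nat.cast_nonneg (α := ℝ) n]
  have ha0 : (0:ℝ) < a := lt_of_lt_of_le one_pos ha1
  have hA : (seqA n : ℝ) = a := by simp only [seqA, ha_def]; push_cast; ring
  have hB : (seqB n : ℝ) = a ^ (n+2) + 1 := by simp only [seqB, ha_def]; push_cast; ring
  have hb0 : (0:ℝ) < (seqB n : ℝ) := by rw [hB]; positivity
  set r : ℝ := (seqA n : ℝ) / (seqB n : ℝ) with hr_def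
  have hr0 : 0 < r := seq_dist_pos n
  have hrb : r * (seqB n : ℝ) = a := by rw [hr_def, div_mul_cancel₀ _ hb0.ne', hA]
  have hsplit : r ^ ((1:ℝ) + ε) * (seqB n : ℝ) = r ^ ε * a := by
    rw [Real.rpow_add hr0, Real.rpow_one, mul_comm r (r ^ ε), mul_assoc, hrb]
  have hba : a * a ^ (n+1) ≤ (seqB n : ℝ) := by
    rw [hB]
    have : a * a ^ (n+1) = a ^ (n+2) := by ring
    rw [this]
    linarith
  have hr_le : r ≤ (a ^ (n+1))⁻¹ := by
    rw [hr_def, hA, div_le_iff₀ hb0, inv_mul_eq_div, le_div_iff₀ (pow_pos ha0 (n+1))]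
    exact hba
  have hre : r ^ ε ≤ a ^ (-(((n:ℝ)+1) * ε)) := by
    calc r ^ ε ≤ ((a ^ (n+1))⁻¹) ^ ε := Real.rpow_le_rpow hr0.le hr_le hε.le
      _ = a ^ (-(((n:ℝ)+1) * ε)) := by
          rw [← Real.rpow_natCast a (n+1), ← Real.rpow_neg ha0.le, ← Real.rpow_mul ha0.le]
          push_cast
          ring_nf
  have hfinal : a ^ (-(((n:ℝ)+1) * ε)) * a ≤ 1 := by
    have heq : a ^ (-(((n:ℝ)+1) * ε)) * a = a ^ (-(((n:ℝ)+1) * ε) + 1) := by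
      rw [Real.rpow_add ha0, Real.rpow_one]
    rw [heq]
    apply Real.rpow_le_one_of_one_le_of_nonpos ha1
    have hNε : 1/ε ≤ (⌈1/ε⌉₊ : ℝ) := Nat.le_ceil _
    have hcast : ((⌈1/ε⌉₊ + 1 : ℕ) : ℝ) ≤ (n:ℝ) := Nat.cast_le.mpr hn
    push_cast at hcast
    have h1 : 1 ≤ ((n:ℝ) + 1) * ε := by
      have hmul : 1/ε * ε ≤ ((n:ℝ)+1) * ε := by
        apply mul_le_mul_of_nonneg_right _ hε.le
        linarith
      rwa [one_div, inv_mul_cancel₀ hε.ne'] at hmul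
    linarith
  calc r ^ ((1:ℝ) + ε) * (seqB n : ℝ) = r ^ ε * a := hsplit
    _ ≤ a ^ (-(((n:ℝ)+1) * ε)) * a := mul_le_mul_of_nonneg_right hre ha0.le
    _ ≤ 1 := hfinal

/-- There is a sequence `Qₙ → P = [0:0:1]` in `ℙ²(ℚ) ∖ {P}` such that
`dist(P,Qₙ)^(1+ε) · H(Qₙ)` is bounded for every `ε > 0` while `dist(P,Qₙ) · H(Qₙ)` is
unbounded; hence the set of admissible exponents is nonempty but has no least element,
so the sequence has no approximation constant. -/
theorem statement4 :
    ∃ Q : ℕ → Projectivization ℚ (Fin 3 → ℚ),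
      (∀ i, Q i ≠ basePoint) ∧
      Tendsto (fun i => projDist ℚ basePoint (Q i)) atTop (𝓝 0) ∧
      (∀ ε : ℝ, 0 < ε →
        ∃ C : ℝ, ∀ i, projDist ℚ basePoint (Q i) ^ (1 + ε) * projHeight ℚ (Q i) ≤ C) ∧
      (¬ ∃ C : ℝ, ∀ i, projDist ℚ basePoint (Q i) * projHeight ℚ (Q i) ≤ C) ∧
      {a : ℝ | 0 ≤ a ∧
        ∃ C : ℝ, ∀ i, projDist ℚ basePoint (Q i) ^ a * projHeight ℚ (Q i) ≤ C}.Nonempty ∧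
      ¬ ∃ α : ℝ, IsApproxConst (projDist ℚ) (projHeight ℚ) basePoint Q α := by
  classical
  refine ⟨seqQ, seqQ_ne, ?_, ?_, ?_, ?_, ?_⟩
  case _ => simpa only [seqQ_dist] using seq_tendsto
  case _ =>
    intro ε hε
    obtain ⟨C, hC⟩ := seq_eps_bound hε
    exact ⟨C, fun i => by rw [seqQ_dist, seqQ_height]; exact hC i⟩
  case _ =>
    rintro ⟨C, hC⟩
    have key : ∀ i, ((seqA i : ℝ)) ≤ C := by
      intro i
      have := hC i
      rw [seqQ_dist, seqQ_height, div_mul_cancel₀] at this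
      · exact this
      · exact ne_of_gt (by simp only [seqB]; positivity)
    have := key (⌈C⌉₊)
    have hle : C ≤ (⌈C⌉₊ : ℝ) := Nat.le_ceil C
    simp only [seqA] at this
    push_cast at this
    linarith
  case _ =>
    refine ⟨2, by norm_num, ?_⟩
    obtain ⟨C, hC⟩ := seq_eps_bound one_pos
    refine ⟨C, fun i => ?_⟩
    rw [seqQ_dist, seqQ_height]
    have := hC i
    norm_num at this ⊢
    exact this
  case _ =>
    rintro ⟨α, hmem, hlb⟩
    obtain ⟨hα0, C, hC⟩ := hmem
    -- First: α > 1
    have hα1 : 1 < α := by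
      by_contra hle
      push_neg at hle
      -- then dist * H bounded, contradiction
      have key : ∀ i, ((seqA i : ℝ)) ≤ C := by
        intro i
        have h1 := hC i
        rw [seqQ_dist, seqQ_height] at h1
        have hd0 := seq_dist_pos i
        have hd1 := seq_dist_le_one i
        have hmono : ((seqA i : ℝ) / (seqB i : ℝ)) ^ (1:ℝ) ≤
            ((seqA i : ℝ) / (seqB i : ℝ)) ^ α :=
          Real.rpow_le_rpow_of_exponent_ge hd0 hd1 hle
        have hB0 : (0:ℝ) < (seqB i : ℝ) := by simp only [seqB]; positivity
        have h2 : ((seqA i : ℝ) / (seqB i : ℝ)) ^ (1:ℝ) * (seqB i : ℝ) ≤ C := by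
          calc ((seqA i : ℝ) / (seqB i : ℝ)) ^ (1:ℝ) * (seqB i : ℝ)
              ≤ ((seqA i : ℝ) / (seqB i : ℝ)) ^ α * (seqB i : ℝ) :=
                mul_le_mul_of_nonneg_right hmono hB0.le
            _ ≤ C := h1
        rwa [Real.rpow_one, div_mul_cancel₀ _ hB0.ne'] at h2
      have hi := key (⌈C⌉₊)
      have hle2 : C ≤ (⌈C⌉₊ : ℝ) := Nat.le_ceil C
      simp only [seqA] at hi
      push_cast at hi
      linarith
    -- β := (1 + α) / 2 is in the set and β < α
    set β : ℝ := (1 + α) / 2 with hβ_def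
    have hβ1 : 1 < β := by rw [hβ_def]; linarith
    have hβα : β < α := by rw [hβ_def]; linarith
    have hβmem : β ∈ {a : ℝ | 0 ≤ a ∧
        ∃ C : ℝ, ∀ i, projDist ℚ basePoint (seqQ i) ^ a * projHeight ℚ (seqQ i) ≤ C} := by
      refine ⟨by linarith, ?_⟩
      obtain ⟨C', hC'⟩ := seq_eps_bound (ε := β - 1) (by linarith)
      refine ⟨C', fun i => ?_⟩
      rw [seqQ_dist, seqQ_height]
      have := hC' i
      rwa [show (1:ℝ) + (β - 1) = β by ring] at this
    exact absurd (hlb hβmem) (not_le.mpr hβα)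

end
end

section
/- Let k be a number field, let P = (P₁, P₂) ∈ ℙ^1(k) × ℙ^1(k), and let a, b be positive integers. Then the approximation constant of P on ℙ^1(k) × ℙ^1(k) with respect to the height H_{a,b}(S,T) = H(S)^a · H(T)^b exists and equals min(a,b); moreover, a sequence of best approximation to P with respect to H_{a,b} can be chosen inside the fibre {P₁} × ℙ^1(k) when b ≤ a, and inside the fibre ℙ^1(k) × {P₂} when a ≤ b. (This is the paper's conjecture on rational approximations verified for the split minimal rational surface ℙ^1 × ℙ^1, on which the ample divisor classes are exactly the O(a,b) with a, b ≥ 1 and the fibres through P are rational curves.) -/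
open NumberField Filter Topology
open scoped nonZeroDivisors Pointwise
set_option linter.unusedSectionVars false
set_option linter.unusedVariables false
set_option maxHeartbeats 1000000

noncomputable section

variable (k : Type*) [Field k] [NumberField k]

/-- The distance on `ℙ¹(k) × ℙ¹(k)`. -/
def p1p1Dist (x y : Projectivization k (Fin 2 → k) × Projectivization k (Fin 2 → k)) : ℝ :=
  max (projDist k x.1 y.1) (projDist k x.2 y.2)

/-- The height `H_{a,b}(S,T) = H(S)^a · H(T)^b` on `ℙ¹(k) × ℙ¹(k)` attached to the
ample divisor class `O(a,b)`. -/
def p1p1Height (a b : ℕ)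
    (x : Projectivization k (Fin 2 → k) × Projectivization k (Fin 2 → k)) : ℝ :=
  projHeight k x.1 ^ a * projHeight k x.2 ^ b

variable {k}

section Sup
variable {ι : Type*} [Fintype ι]

lemma sup_bddAbove (v : InfinitePlace k) (x : ι → k) : BddAbove (Set.range fun j => v (x j)) :=
  (Set.finite_range _).bddAbove

lemma my_sup_nonneg (v : InfinitePlace k) (x : ι → k) : 0 ≤ ⨆ j, v (x j) :=
  Real.iSup_nonneg fun j => apply_nonneg v (x j)

lemma le_sup (v : InfinitePlace k) (x : ι → k) (j : ι) : v (x j) ≤ ⨆ j, v (x j) :=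
  le_ciSup (sup_bddAbove v x) j

lemma my_sup_pos (v : InfinitePlace k) {x : ι → k} (hx : x ≠ 0) : 0 < ⨆ j, v (x j) := by
  rcases Function.ne_iff.mp hx with ⟨j, hj⟩
  exact lt_of_lt_of_le (InfinitePlace.pos_iff.mpr hj) (le_sup v x j)

lemma my_sup_le [Nonempty ι] (v : InfinitePlace k) (x : ι → k) {c : ℝ}
    (h : ∀ j, v (x j) ≤ c) : (⨆ j, v (x j)) ≤ c := ciSup_le h

lemma my_sup_smul [Nonempty ι] (v : InfinitePlace k) (c : k) (x : ι → k) :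
    (⨆ j, v (c • x j)) = v c * ⨆ j, v (x j) := by
  have h : ∀ j, v (c • x j) = v c * v (x j) := fun j => by
    simp only [smul_eq_mul, map_mul]
  simp_rw [h]
  rw [Real.mul_iSup_of_nonneg (apply_nonneg v c)]
end Sup

section Height
variable {ι : Type*} [Fintype ι] [Nonempty ι]

/-- The "norm" part of the height. -/
def hNorm (x : ι → k) : ℝ :=
  ((FractionalIdeal.absNorm (FractionalIdeal.spanFinset (𝓞 k) Finset.univ x) : ℚ) : ℝ)

/-- The base of the height. -/
def hBase (x : ι → k) : ℝ :=
  (∏ v : InfinitePlace k, (⨆ j, v (x j)) ^ v.mult) / hNorm x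

lemma vecHeight_eq (x : ι → k) :
    vecHeight k x = hBase x ^ ((Module.finrank ℚ k : ℝ)⁻¹) := rfl

lemma hNorm_pos {x : ι → k} (hx : x ≠ 0) : 0 < hNorm x := by
  have h1 : FractionalIdeal.spanFinset (𝓞 k) Finset.univ x ≠ 0 := by
    rw [FractionalIdeal.spanFinset_ne_zero]
    rcases Function.ne_iff.mp hx with ⟨j, hj⟩
    exact ⟨j, Finset.mem_univ j, hj⟩
  have h2 := FractionalIdeal.absNorm_nonneg (K := k) (FractionalIdeal.spanFinset (𝓞 k) Finset.univ x)
  have h3 : FractionalIdeal.absNorm (FractionalIdeal.spanFinset (𝓞 k) Finset.univ x) ≠ 0 := by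
    rwa [ne_eq, FractionalIdeal.absNorm_eq_zero_iff]
  have : (0:ℚ) < FractionalIdeal.absNorm (FractionalIdeal.spanFinset (𝓞 k) Finset.univ x) :=
    lt_of_le_of_ne h2 (Ne.symm h3)
  unfold hNorm
  exact_mod_cast this

lemma prodSup_pos {x : ι → k} (hx : x ≠ 0) :
    0 < ∏ v : InfinitePlace k, (⨆ j, v (x j)) ^ v.mult :=
  Finset.prod_pos fun v _ => pow_pos (my_sup_pos v hx) _

lemma hBase_pos {x : ι → k} (hx : x ≠ 0) : 0 < hBase x :=
  div_pos (prodSup_pos hx) (hNorm_pos hx)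

lemma vecHeight_pos {x : ι → k} (hx : x ≠ 0) : 0 < vecHeight k x :=
  Real.rpow_pos_of_pos (hBase_pos hx) _

lemma finrank_pos' : (0:ℝ) < (Module.finrank ℚ k : ℝ) := by
  exact_mod_cast Module.finrank_pos (R := ℚ) (M := k)

lemma finrank_ne_zero' : ((Module.finrank ℚ k : ℝ)) ≠ 0 := ne_of_gt finrank_pos'

lemma le_vecHeight_of {x : ι → k} {c : ℝ} (hc : 0 ≤ c)
    (h : c ^ (Module.finrank ℚ k) ≤ hBase x) : c ≤ vecHeight k x := by
  have h2 := Real.rpow_le_rpow (pow_nonneg hc _) h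
    (inv_nonneg.mpr (le_of_lt (finrank_pos' (k := k))))
  rwa [← Real.rpow_natCast c (Module.finrank ℚ k), ← Real.rpow_mul hc,
    mul_inv_cancel₀ (finrank_ne_zero' (k := k)), Real.rpow_one] at h2

lemma vecHeight_le_of {x : ι → k} {c : ℝ} (hc : 0 ≤ c) (hx : x ≠ 0)
    (h : hBase x ≤ c ^ (Module.finrank ℚ k)) : vecHeight k x ≤ c := by
  have h2 := Real.rpow_le_rpow (le_of_lt (hBase_pos hx)) h
    (inv_nonneg.mpr (le_of_lt (finrank_pos' (k := k))))
  rwa [← Real.rpow_natCast c (Module.finrank ℚ k), ← Real.rpow_mul hc,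
    mul_inv_cancel₀ (finrank_ne_zero' (k := k)), Real.rpow_one] at h2

lemma prod_place_eq_norm (t : k) :
    (∏ v : InfinitePlace k, (v t) ^ v.mult) = ((|Algebra.norm ℚ t| : ℚ) : ℝ) := by
  exact_mod_cast InfinitePlace.prod_eq_abs_norm t

lemma absNorm_anti {I J : FractionalIdeal (𝓞 k)⁰ k} (hIJ : I ≤ J) (hI : I ≠ 0) :
    FractionalIdeal.absNorm J ≤ FractionalIdeal.absNorm I := by
  have hJ : J ≠ 0 := fun h => hI (le_antisymm (h ▸ hIJ) (FractionalIdeal.zero_le I))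
  have h1 : I * J⁻¹ ≤ 1 := by
    rw [← mul_inv_cancel₀ hJ]
    exact mul_le_mul_left hIJ J⁻¹
  obtain ⟨C₀, hC₀⟩ := FractionalIdeal.le_one_iff_exists_coeIdeal.mp h1
  have hIC : I = ↑C₀ * J := by
    rw [hC₀, mul_assoc, mul_comm J⁻¹ J, mul_inv_cancel₀ hJ, mul_one]
  have hC₀ne : (C₀ : FractionalIdeal (𝓞 k)⁰ k) ≠ 0 := by
    intro h
    exact hI (by rw [hIC, h, zero_mul])
  have h2 : FractionalIdeal.absNorm I
      = FractionalIdeal.absNorm (C₀ : FractionalIdeal (𝓞 k)⁰ k) * FractionalIdeal.absNorm J := by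
    rw [hIC, map_mul]
  have h3 : (1 : ℚ) ≤ FractionalIdeal.absNorm (C₀ : FractionalIdeal (𝓞 k)⁰ k) := by
    rw [FractionalIdeal.coeIdeal_absNorm]
    have : C₀ ≠ ⊥ := by
      intro h; exact hC₀ne (by rw [h]; simp)
    have : Ideal.absNorm C₀ ≠ 0 := by
      rwa [ne_eq, Ideal.absNorm_eq_zero_iff]
    exact_mod_cast Nat.one_le_iff_ne_zero.mpr this
  calc FractionalIdeal.absNorm J = 1 * FractionalIdeal.absNorm J := (one_mul _).symm
    _ ≤ _ * FractionalIdeal.absNorm J := by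
        exact mul_le_mul_of_nonneg_right h3 (FractionalIdeal.absNorm_nonneg J)
    _ = FractionalIdeal.absNorm I := h2.symm

lemma hNorm_le_norm_single {x : ι → k} (j₀ : ι) (hj₀ : x j₀ ≠ 0) :
    hNorm x ≤ ((|Algebra.norm ℚ (x j₀)| : ℚ) : ℝ) := by
  have hmem : x j₀ ∈ FractionalIdeal.spanFinset (𝓞 k) Finset.univ x := by
    change x j₀ ∈ (FractionalIdeal.spanFinset (𝓞 k) Finset.univ x : Submodule (𝓞 k) k)
    rw [FractionalIdeal.spanFinset_coe]
    exact Submodule.subset_span ⟨j₀, Finset.mem_univ j₀, rfl⟩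
  have hle : FractionalIdeal.spanSingleton (𝓞 k)⁰ (x j₀)
      ≤ FractionalIdeal.spanFinset (𝓞 k) Finset.univ x :=
    FractionalIdeal.spanSingleton_le_iff_mem.mpr hmem
  have hne : FractionalIdeal.spanSingleton (𝓞 k)⁰ (x j₀) ≠ 0 := by
    rwa [ne_eq, FractionalIdeal.spanSingleton_eq_zero_iff]
  have := absNorm_anti hle hne
  rw [FractionalIdeal.absNorm_span_singleton] at this
  unfold hNorm
  exact_mod_cast this

lemma one_le_vecHeight {x : ι → k} (hx : x ≠ 0) : 1 ≤ vecHeight k x := by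
  apply le_vecHeight_of zero_le_one
  rw [one_pow]
  rw [hBase, le_div_iff₀ (hNorm_pos hx), one_mul]
  rcases Function.ne_iff.mp hx with ⟨j₀, hj₀⟩
  calc hNorm x ≤ ((|Algebra.norm ℚ (x j₀)| : ℚ) : ℝ) := hNorm_le_norm_single j₀ hj₀
    _ = ∏ v : InfinitePlace k, (v (x j₀)) ^ v.mult := (prod_place_eq_norm _).symm
    _ ≤ ∏ v : InfinitePlace k, (⨆ j, v (x j)) ^ v.mult := by
        apply Finset.prod_le_prod
        · intro v _; exact pow_nonneg (apply_nonneg v _) _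
        · intro v _; exact pow_le_pow_left₀ (apply_nonneg v _) (le_sup v x j₀) _

lemma spanFinset_smul (c : k) (x : ι → k) :
    FractionalIdeal.spanFinset (𝓞 k) Finset.univ (c • x)
      = FractionalIdeal.spanSingleton (𝓞 k)⁰ c * FractionalIdeal.spanFinset (𝓞 k) Finset.univ x := by
  apply FractionalIdeal.coeToSubmodule_injective
  simp only [FractionalIdeal.coe_mul, FractionalIdeal.coe_spanSingleton,
    FractionalIdeal.spanFinset_coe]
  rw [Submodule.span_singleton_mul]
  have himg : (c • x) '' (Finset.univ : Finset ι) = c • (x '' (Finset.univ : Finset ι)) := by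
    rw [show (c • x) = (fun z => c • z) ∘ x from rfl, Set.image_comp, Set.image_smul]
  rw [himg, ← Submodule.smul_span]

lemma hNorm_smul {c : k} (x : ι → k) :
    hNorm (c • x) = ((|Algebra.norm ℚ c| : ℚ) : ℝ) * hNorm x := by
  unfold hNorm
  rw [spanFinset_smul, map_mul, FractionalIdeal.absNorm_span_singleton]
  push_cast
  ring

lemma vecHeight_smul {c : k} (hc : c ≠ 0) (x : ι → k) :
    vecHeight k (c • x) = vecHeight k x := by
  rw [vecHeight_eq, vecHeight_eq]
  congr 1
  unfold hBase
  rw [hNorm_smul]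
  have h1 : ∀ v : InfinitePlace k, (⨆ j, v ((c • x) j)) ^ v.mult
      = (v c) ^ v.mult * (⨆ j, v (x j)) ^ v.mult := by
    intro v
    rw [show (⨆ j, v ((c • x) j)) = ⨆ j, v (c • x j) from rfl, my_sup_smul, mul_pow]
  rw [Finset.prod_congr rfl fun v _ => h1 v, Finset.prod_mul_distrib, prod_place_eq_norm]
  have hc' : ((|Algebra.norm ℚ c| : ℚ) : ℝ) ≠ 0 := by
    have : Algebra.norm ℚ c ≠ 0 := by
      simpa [Algebra.norm_eq_zero_iff] using hc
    simpa using this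
  rw [mul_div_mul_left _ _ hc']

end Height

open Projectivization in
lemma exists_unit_smul_rep {m : ℕ} (y : Fin m → k) (hy : y ≠ 0) :
    ∃ a : kˣ, (Projectivization.mk k y hy).rep = (a : k) • y := by
  have h1 : Projectivization.mk k ((Projectivization.mk k y hy).rep) (rep_nonzero _)
      = Projectivization.mk k y hy := mk_rep _
  rw [mk_eq_mk_iff] at h1
  obtain ⟨a, ha⟩ := h1
  exact ⟨a, by rw [← ha]; rfl⟩

lemma projHeight_mk (y : Fin 2 → k) (hy : y ≠ 0) :
    projHeight k (Projectivization.mk k y hy) = vecHeight k y := by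
  obtain ⟨a, ha⟩ := exists_unit_smul_rep y hy
  rw [projHeight, ha, vecHeight_smul (Units.ne_zero a)]

lemma one_le_projHeight (P : Projectivization k (Fin 2 → k)) : 1 ≤ projHeight k P :=
  one_le_vecHeight (Projectivization.rep_nonzero P)

lemma projHeight_pos (P : Projectivization k (Fin 2 → k)) : 0 < projHeight k P :=
  lt_of_lt_of_le zero_lt_one (one_le_projHeight P)

lemma fin_two_cases (i : Fin 2) : i = 0 ∨ i = 1 := by omega

lemma sup_pair (v : InfinitePlace k) (x y : Fin 2 → k) :
    (⨆ p : Fin 2 × Fin 2, v (x p.1 * y p.2 - x p.2 * y p.1)) = v (x 0 * y 1 - x 1 * y 0) := by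
  apply le_antisymm
  · apply ciSup_le
    rintro ⟨i, j⟩
    rcases fin_two_cases i with rfl | rfl <;> rcases fin_two_cases j with rfl | rfl
    · simp only [sub_self, map_zero]; exact apply_nonneg v _
    · exact le_refl _
    · have h : x 1 * y 0 - x 0 * y 1 = -(x 0 * y 1 - x 1 * y 0) := by ring
      rw [h, show v (-(x 0 * y 1 - x 1 * y 0)) = v (x 0 * y 1 - x 1 * y 0) from
        v.1.map_neg (x 0 * y 1 - x 1 * y 0)]
    · simp only [sub_self, map_zero]; exact apply_nonneg v _
  · exact le_ciSup (f := fun p : Fin 2 × Fin 2 => v (x p.1 * y p.2 - x p.2 * y p.1))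
      ((Set.finite_range _).bddAbove) ((0 : Fin 2), (1 : Fin 2))

lemma projDist_eq (S T : Projectivization k (Fin 2 → k)) :
    projDist k S T = ∑ v : InfinitePlace k,
      v (S.rep 0 * T.rep 1 - S.rep 1 * T.rep 0) / ((⨆ j, v (S.rep j)) * (⨆ j, v (T.rep j))) := by
  unfold projDist
  exact Finset.sum_congr rfl fun v _ => by rw [sup_pair]

lemma projDist_nonneg (S T : Projectivization k (Fin 2 → k)) : 0 ≤ projDist k S T := by
  rw [projDist_eq]
  apply Finset.sum_nonneg
  intro v _
  exact div_nonneg (apply_nonneg v _) (mul_nonneg (my_sup_nonneg v _) (my_sup_nonneg v _))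

lemma projDist_self (S : Projectivization k (Fin 2 → k)) : projDist k S S = 0 := by
  rw [projDist_eq]
  apply Finset.sum_eq_zero
  intro v _
  rw [show S.rep 0 * S.rep 1 - S.rep 1 * S.rep 0 = 0 by ring, map_zero, zero_div]

lemma projDist_mk (S : Projectivization k (Fin 2 → k)) (y : Fin 2 → k) (hy : y ≠ 0) :
    projDist k S (Projectivization.mk k y hy) = ∑ v : InfinitePlace k,
      v (S.rep 0 * y 1 - S.rep 1 * y 0) / ((⨆ j, v (S.rep j)) * (⨆ j, v (y j))) := by
  obtain ⟨a, ha⟩ := exists_unit_smul_rep y hy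
  rw [projDist_eq]
  apply Finset.sum_congr rfl
  intro v _
  have ha0 : (a : k) ≠ 0 := Units.ne_zero a
  have hnum : S.rep 0 * (Projectivization.mk k y hy).rep 1
      - S.rep 1 * (Projectivization.mk k y hy).rep 0
      = (a : k) * (S.rep 0 * y 1 - S.rep 1 * y 0) := by
    rw [ha]; simp only [Pi.smul_apply, smul_eq_mul]; ring
  have hsup : (⨆ j, v ((Projectivization.mk k y hy).rep j)) = v a * ⨆ j, v (y j) := by
    rw [ha]
    exact my_sup_smul v (a : k) y
  rw [hnum, map_mul, hsup, show (⨆ j, v (S.rep j)) * (v ↑a * ⨆ j, v (y j))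
      = v ↑a * ((⨆ j, v (S.rep j)) * ⨆ j, v (y j)) by ring,
    mul_div_mul_left _ _ (InfinitePlace.pos_iff.mpr ha0).ne']

lemma fun_fin2_eq_zero {x : Fin 2 → k} (h0 : x 0 = 0) (h1 : x 1 = 0) : x = 0 := by
  funext j
  rcases fin_two_cases j with rfl | rfl
  · exact h0
  · exact h1

lemma proportional_of_det {x y : Fin 2 → k} (hx : x ≠ 0) (hy : y ≠ 0)
    (h : x 0 * y 1 = x 1 * y 0) : ∃ c : k, c • x = y := by
  by_cases hx0 : x 0 = 0
  · have hx1 : x 1 ≠ 0 := fun h1 => hx (fun_fin2_eq_zero hx0 h1)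
    have hy0 : y 0 = 0 := by
      have := h
      rw [hx0, zero_mul] at this
      rcases mul_eq_zero.mp this.symm with h' | h'
      · exact absurd h' hx1
      · exact h'
    refine ⟨y 1 / x 1, funext fun j => ?_⟩
    rcases fin_two_cases j with rfl | rfl
    · simp only [Pi.smul_apply, smul_eq_mul, hx0, mul_zero, hy0]
    · simp only [Pi.smul_apply, smul_eq_mul]
      exact div_mul_cancel₀ _ hx1
  · refine ⟨y 0 / x 0, funext fun j => ?_⟩
    rcases fin_two_cases j with rfl | rfl
    · simp only [Pi.smul_apply, smul_eq_mul]
      exact div_mul_cancel₀ _ hx0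
    · simp only [Pi.smul_apply, smul_eq_mul]
      rw [div_mul_eq_mul_div, mul_comm (y 0) (x 1), ← h, mul_comm (x 0) (y 1),
        mul_div_assoc, div_self hx0, mul_one]

lemma det_ne_zero_of_ne {S T : Projectivization k (Fin 2 → k)} (h : S ≠ T) :
    S.rep 0 * T.rep 1 - S.rep 1 * T.rep 0 ≠ 0 := by
  intro h0
  obtain ⟨c, hc⟩ := proportional_of_det (Projectivization.rep_nonzero S)
    (Projectivization.rep_nonzero T) (sub_eq_zero.mp h0)
  have : T = S := by
    conv_lhs => rw [← Projectivization.mk_rep T]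
    conv_rhs => rw [← Projectivization.mk_rep S]
    rw [Projectivization.mk_eq_mk_iff']
    exact ⟨c, hc⟩
  exact h this.symm

lemma liouville {S T : Projectivization k (Fin 2 → k)} (h : S ≠ T) :
    1 / (projHeight k S * projHeight k T) ≤ projDist k S T := by
  classical
  have hx : S.rep ≠ 0 := Projectivization.rep_nonzero S
  have hy : T.rep ≠ 0 := Projectivization.rep_nonzero T
  set x := S.rep with hxdef
  set y := T.rep with hydef
  set t := x 0 * y 1 - x 1 * y 0 with htdef
  have ht : t ≠ 0 := det_ne_zero_of_ne h
  set X : InfinitePlace k → ℝ := fun v => ⨆ j, v (x j) with hXdef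
  set Y : InfinitePlace k → ℝ := fun v => ⨆ j, v (y j) with hYdef
  have hX : ∀ v, 0 < X v := fun v => my_sup_pos v hx
  have hY : ∀ v, 0 < Y v := fun v => my_sup_pos v hy
  set a : InfinitePlace k → ℝ := fun v => v t / (X v * Y v) with hadef
  have ha : ∀ v, 0 < a v := fun v =>
    div_pos (InfinitePlace.pos_iff.mpr ht) (mul_pos (hX v) (hY v))
  obtain ⟨v₀, -, hv₀⟩ := Finset.exists_max_image (Finset.univ : Finset (InfinitePlace k)) a
    Finset.univ_nonempty
  have key1 : ∏ v : InfinitePlace k, a v ^ v.mult ≤ a v₀ ^ (Module.finrank ℚ k) := by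
    calc ∏ v : InfinitePlace k, a v ^ v.mult
        ≤ ∏ v : InfinitePlace k, a v₀ ^ v.mult :=
          Finset.prod_le_prod (fun v _ => pow_nonneg (ha v).le _)
            (fun v _ => pow_le_pow_left₀ (ha v).le (hv₀ v (Finset.mem_univ v)) _)
      _ = a v₀ ^ (∑ v : InfinitePlace k, v.mult) := Finset.prod_pow_eq_pow_sum _ _ _
      _ = _ := by rw [InfinitePlace.sum_mult_eq]
  have hNt : hNorm x * hNorm y ≤ ((|Algebra.norm ℚ t| : ℚ) : ℝ) := by
    have hmem : t ∈ FractionalIdeal.spanFinset (𝓞 k) Finset.univ x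
        * FractionalIdeal.spanFinset (𝓞 k) Finset.univ y := by
      change t ∈ ((_ * _ : FractionalIdeal (𝓞 k)⁰ k) : Submodule (𝓞 k) k)
      rw [FractionalIdeal.coe_mul]
      apply Submodule.sub_mem
      · exact Submodule.mul_mem_mul
          (by rw [FractionalIdeal.spanFinset_coe]
              exact Submodule.subset_span ⟨0, Finset.mem_univ _, rfl⟩)
          (by rw [FractionalIdeal.spanFinset_coe]
              exact Submodule.subset_span ⟨1, Finset.mem_univ _, rfl⟩)
      · exact Submodule.mul_mem_mul
          (by rw [FractionalIdeal.spanFinset_coe]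
              exact Submodule.subset_span ⟨1, Finset.mem_univ _, rfl⟩)
          (by rw [FractionalIdeal.spanFinset_coe]
              exact Submodule.subset_span ⟨0, Finset.mem_univ _, rfl⟩)
    have hle := FractionalIdeal.spanSingleton_le_iff_mem.mpr hmem
    have h2 := absNorm_anti hle (by rwa [ne_eq, FractionalIdeal.spanSingleton_eq_zero_iff])
    rw [FractionalIdeal.absNorm_span_singleton, map_mul] at h2
    unfold hNorm
    exact_mod_cast h2
  have hPX : 0 < ∏ v : InfinitePlace k, X v ^ v.mult := prodSup_pos hx
  have hPY : 0 < ∏ v : InfinitePlace k, Y v ^ v.mult := prodSup_pos hy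
  have key2 : 1 / (hBase x * hBase y) ≤ ∏ v : InfinitePlace k, a v ^ v.mult := by
    have e1 : ∏ v : InfinitePlace k, a v ^ v.mult
        = ((|Algebra.norm ℚ t| : ℚ) : ℝ)
          / ((∏ v : InfinitePlace k, X v ^ v.mult) * (∏ v : InfinitePlace k, Y v ^ v.mult)) := by
      rw [← prod_place_eq_norm t, ← Finset.prod_mul_distrib, ← Finset.prod_div_distrib]
      exact Finset.prod_congr rfl fun v _ => by rw [hadef, div_pow, mul_pow]
    have e2 : 1 / (hBase x * hBase y)
        = (hNorm x * hNorm y)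
          / ((∏ v : InfinitePlace k, X v ^ v.mult) * (∏ v : InfinitePlace k, Y v ^ v.mult)) := by
      rw [hBase, hBase, one_div, div_mul_div_comm, inv_div]
    rw [e1, e2]
    exact (div_le_div_iff_of_pos_right (mul_pos hPX hPY)).mpr hNt
  have hBpos : 0 < hBase x * hBase y := mul_pos (hBase_pos hx) (hBase_pos hy)
  have h4 : 1 / (hBase x * hBase y) ≤ a v₀ ^ (Module.finrank ℚ k) := le_trans key2 key1
  have h5 : (1 / (hBase x * hBase y)) ^ ((Module.finrank ℚ k : ℝ)⁻¹) ≤ a v₀ := by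
    have h6 := Real.rpow_le_rpow (by positivity) h4 (inv_nonneg.mpr (finrank_pos' (k := k)).le)
    rwa [← Real.rpow_natCast (a v₀) (Module.finrank ℚ k), ← Real.rpow_mul (ha v₀).le,
      mul_inv_cancel₀ (finrank_ne_zero' (k := k)), Real.rpow_one] at h6
  have h7 : 1 / (projHeight k S * projHeight k T)
      = (1 / (hBase x * hBase y)) ^ ((Module.finrank ℚ k : ℝ)⁻¹) := by
    rw [projHeight, projHeight, vecHeight_eq, vecHeight_eq, one_div, one_div,
      Real.inv_rpow hBpos.le, Real.mul_rpow (hBase_pos hx).le (hBase_pos hy).le]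
  rw [h7]
  refine le_trans h5 ?_
  rw [projDist_eq]
  exact Finset.single_le_sum (f := fun v : InfinitePlace k => v t / (X v * Y v))
    (fun v _ => (ha v).le) (Finset.mem_univ v₀)

lemma place_natCast (v : InfinitePlace k) (n : ℕ) : v ((n : k)) = (n : ℝ) := by
  rw [← InfinitePlace.norm_embedding_eq, map_natCast]
  simp

lemma place_add_ge (v : InfinitePlace k) (p q : k) : v p - v q ≤ v (p + q) := by
  have h := v.1.add_le (p + q) (-q)
  rw [add_neg_cancel_right, v.1.map_neg] at h
  have e1 : v.1 p = v p := rfl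
  have e2 : v.1 q = v q := rfl
  have e3 : v.1 (p + q) = v (p + q) := rfl
  rw [e1, e2, e3] at h
  linarith

lemma approx_fibre (R : Projectivization k (Fin 2 → k)) :
    ∃ Z : ℕ → Projectivization k (Fin 2 → k),
      (∀ i, Z i ≠ R) ∧ Tendsto (fun i => projDist k R (Z i)) atTop (𝓝 0) ∧
      ∃ C : ℝ, ∀ i, projDist k R (Z i) * projHeight k (Z i) ≤ C := by
  classical
  have hu : R.rep ≠ 0 := Projectivization.rep_nonzero R
  set u := R.rep with hudef
  set w : Fin 2 → k := if u 0 = 0 then ![1, 0] else ![0, 1] with hwdef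
  have hw01 : ∀ j, w j = 0 ∨ w j = 1 := by
    intro j
    rw [hwdef]
    split <;> rcases fin_two_cases j with rfl | rfl <;> simp
  set t := u 0 * w 1 - u 1 * w 0 with htdef
  have ht : t ≠ 0 := by
    rw [htdef, hwdef]
    by_cases h0 : u 0 = 0
    · have h1 : u 1 ≠ 0 := fun h1 => hu (fun_fin2_eq_zero h0 h1)
      simp [h0, h1]
    · simp [h0]
  have hnotprop : ∀ c : k, w ≠ c • u := by
    intro c hc
    apply ht
    rw [htdef, hc]
    simp only [Pi.smul_apply, smul_eq_mul]
    ring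
  set x : ℕ → Fin 2 → k := fun n => (n : k) • u + w with hxdef
  have hxn : ∀ n, x n ≠ 0 := by
    intro n h
    apply hnotprop (-(n : k))
    funext j
    have hj := congrFun h j
    simp only [hxdef, Pi.add_apply, Pi.smul_apply, smul_eq_mul, Pi.zero_apply] at hj
    simp only [Pi.smul_apply, smul_eq_mul]
    linear_combination hj
  set Z' : ℕ → Projectivization k (Fin 2 → k) := fun n => Projectivization.mk k (x n) (hxn n)
    with hZ'def
  have hZ'R : ∀ n, Z' n ≠ R := by
    intro n hZ
    rw [hZ'def] at hZ
    simp only at hZ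
    rw [← Projectivization.mk_rep R, Projectivization.mk_eq_mk_iff'] at hZ
    obtain ⟨c, hc⟩ := hZ
    apply hnotprop (c - (n : k))
    funext j
    have hj := congrFun hc j
    simp only [Pi.smul_apply, smul_eq_mul, hxdef, Pi.add_apply] at hj
    simp only [Pi.smul_apply, smul_eq_mul]
    linear_combination -hj
  have hnum : ∀ n, u 0 * x n 1 - u 1 * x n 0 = t := by
    intro n
    simp only [hxdef, Pi.add_apply, Pi.smul_apply, smul_eq_mul, htdef]
    ring
  set A : InfinitePlace k → ℝ := fun v => ⨆ j, v (u j) with hAdef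
  have hA : ∀ v, 0 < A v := fun v => my_sup_pos v hu
  have hdist : ∀ n, projDist k R (Z' n)
      = ∑ v : InfinitePlace k, v t / (A v * ⨆ j, v (x n j)) := by
    intro n
    rw [hZ'def]
    simp only
    rw [projDist_mk R (x n) (hxn n)]
    exact Finset.sum_congr rfl fun v _ => by rw [hnum]
  have hw1 : ∀ (v : InfinitePlace k) j, v (w j) ≤ 1 := by
    intro v j
    rcases hw01 j with h | h <;> rw [h] <;> simp
  have hYub : ∀ (n : ℕ) (v : InfinitePlace k), (⨆ j, v (x n j)) ≤ (n : ℝ) * A v + 1 := by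
    intro n v
    apply my_sup_le
    intro j
    have h1 : v (x n j) ≤ v ((n : k) * u j) + v (w j) := by
      simp only [hxdef, Pi.add_apply, Pi.smul_apply, smul_eq_mul]
      exact v.1.add_le _ _
    rw [map_mul, place_natCast] at h1
    have h2 : v (u j) ≤ A v := le_sup v u j
    have h3 : (n:ℝ) * v (u j) ≤ (n:ℝ) * A v :=
      mul_le_mul_of_nonneg_left h2 (Nat.cast_nonneg n)
    linarith [hw1 v j]
  have hYlb : ∀ (n : ℕ) (v : InfinitePlace k), (n : ℝ) * A v - 1 ≤ ⨆ j, v (x n j) := by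
    intro n v
    obtain ⟨j₀, hj₀⟩ := Finite.exists_max (fun j => v (u j))
    have hAv : A v = v (u j₀) := le_antisymm (my_sup_le v u hj₀) (le_sup v u j₀)
    have h1 : v ((n : k) * u j₀) - v (w j₀) ≤ v (x n j₀) := by
      simp only [hxdef, Pi.add_apply, Pi.smul_apply, smul_eq_mul]
      exact place_add_ge v _ _
    rw [map_mul, place_natCast, ← hAv] at h1
    have h2 := le_sup v (x n) j₀
    linarith [hw1 v j₀]
  obtain ⟨n₀, hn₀⟩ := exists_nat_ge
    (Finset.univ.sup' Finset.univ_nonempty (fun v : InfinitePlace k => 2 / A v))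
  have h2le : ∀ (v : InfinitePlace k) (n : ℕ), n₀ + 1 ≤ n → 2 ≤ (n : ℝ) * A v := by
    intro v n hn
    have h1 : 2 / A v ≤ (n₀ : ℝ) :=
      le_trans (Finset.le_sup' (f := fun v : InfinitePlace k => 2 / A v) (Finset.mem_univ v)) hn₀
    have h2 : (n₀ : ℝ) ≤ (n : ℝ) := by exact_mod_cast Nat.le_of_succ_le hn
    rw [div_le_iff₀ (hA v)] at h1
    calc (2:ℝ) ≤ (n₀:ℝ) * A v := h1
      _ ≤ (n:ℝ) * A v := mul_le_mul_of_nonneg_right h2 (hA v).le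
  set N : ℕ → ℕ := fun i => i + (n₀ + 1) with hNdef
  have hN : ∀ i, n₀ + 1 ≤ N i := fun i => Nat.le_add_left _ _
  have hN1 : ∀ i, (1:ℝ) ≤ (N i : ℝ) := by
    intro i
    have hNi : N i = i + (n₀ + 1) := rfl
    exact_mod_cast Nat.one_le_iff_ne_zero.mpr (by omega)
  have hYlb2 : ∀ (i : ℕ) (v : InfinitePlace k),
      (N i : ℝ) * A v / 2 ≤ ⨆ j, v (x (N i) j) := by
    intro i v
    have := hYlb (N i) v
    have h2 := h2le v (N i) (hN i)
    linarith
  have hYub2 : ∀ (i : ℕ) (v : InfinitePlace k),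
      (⨆ j, v (x (N i) j)) ≤ (N i : ℝ) * (A v + 1) := by
    intro i v
    have := hYub (N i) v
    have h2 : (1:ℝ) * 1 ≤ (N i : ℝ) * A v := by
      have := h2le v (N i) (hN i); nlinarith [hN1 i, (hA v).le]
    nlinarith [hN1 i, (hA v).le]
  set C₁ : ℝ := ∑ v : InfinitePlace k, v t / (A v ^ 2 / 2) with hC₁def
  have hdistle : ∀ i, projDist k R (Z' (N i)) ≤ C₁ / (N i : ℝ) := by
    intro i
    rw [hdist, hC₁def, Finset.sum_div]
    apply Finset.sum_le_sum
    intro v _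
    have hNpos : (0:ℝ) < (N i : ℝ) := lt_of_lt_of_le zero_lt_one (hN1 i)
    have hYpos : (0:ℝ) < (N i : ℝ) * A v / 2 := div_pos (mul_pos hNpos (hA v)) two_pos
    have h1 : v t / (A v * (⨆ j, v (x (N i) j))) ≤ v t / (A v * ((N i : ℝ) * A v / 2)) := by
      apply div_le_div_of_nonneg_left (apply_nonneg v t) (mul_pos (hA v) hYpos)
      exact mul_le_mul_of_nonneg_left (hYlb2 i v) (hA v).le
    refine le_trans h1 (le_of_eq ?_)
    rw [show A v * ((N i : ℝ) * A v / 2) = (A v ^ 2 / 2) * (N i : ℝ) by ring, ← div_div]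
  have hC₁nonneg : 0 ≤ C₁ := by
    rw [hC₁def]
    exact Finset.sum_nonneg fun v _ => div_nonneg (apply_nonneg v t) (by positivity)
  set J : FractionalIdeal (𝓞 k)⁰ k :=
    FractionalIdeal.spanFinset (𝓞 k) Finset.univ u ⊔ FractionalIdeal.spanFinset (𝓞 k) Finset.univ w
    with hJdef
  have hJne : J ≠ 0 := by
    intro h
    have h1 : FractionalIdeal.spanFinset (𝓞 k) Finset.univ u = 0 :=
      le_antisymm (le_trans le_sup_left h.le) (FractionalIdeal.zero_le _)
    rw [FractionalIdeal.spanFinset_eq_zero] at h1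
    exact hu (funext fun j => h1 j (Finset.mem_univ j))
  have hq0 : (0:ℝ) < ((FractionalIdeal.absNorm J : ℚ) : ℝ) := by
    have h2 := FractionalIdeal.absNorm_nonneg (K := k) J
    have h3 : FractionalIdeal.absNorm J ≠ 0 := by
      rwa [ne_eq, FractionalIdeal.absNorm_eq_zero_iff]
    have h4 : (0:ℚ) < FractionalIdeal.absNorm J := lt_of_le_of_ne h2 (Ne.symm h3)
    exact_mod_cast h4
  have hspanle : ∀ n : ℕ, FractionalIdeal.spanFinset (𝓞 k) Finset.univ (x n) ≤ J := by
    intro n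
    rw [← FractionalIdeal.coe_le_coe, FractionalIdeal.spanFinset_coe, Submodule.span_le]
    rintro - ⟨j, -, rfl⟩
    have hcoe : (J : Submodule (𝓞 k) k)
        = (FractionalIdeal.spanFinset (𝓞 k) Finset.univ u : Submodule (𝓞 k) k)
          ⊔ (FractionalIdeal.spanFinset (𝓞 k) Finset.univ w : Submodule (𝓞 k) k) :=
      FractionalIdeal.coe_sup _ _
    have hmu : u j ∈ (J : Submodule (𝓞 k) k) := by
      rw [hcoe]
      apply Submodule.mem_sup_left
      rw [FractionalIdeal.spanFinset_coe]
      exact Submodule.subset_span ⟨j, Finset.mem_univ j, rfl⟩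
    have hmw : w j ∈ (J : Submodule (𝓞 k) k) := by
      rw [hcoe]
      apply Submodule.mem_sup_right
      rw [FractionalIdeal.spanFinset_coe]
      exact Submodule.subset_span ⟨j, Finset.mem_univ j, rfl⟩
    have hxj : x n j = n • u j + w j := by
      simp only [hxdef, Pi.add_apply, Pi.smul_apply, smul_eq_mul, nsmul_eq_mul]
    show x n j ∈ (J : Submodule (𝓞 k) k)
    rw [hxj]
    exact Submodule.add_mem _ (nsmul_mem hmu n) hmw
  have hNle : ∀ n : ℕ, ((FractionalIdeal.absNorm J : ℚ) : ℝ) ≤ hNorm (x n) := by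
    intro n
    have h1 : FractionalIdeal.spanFinset (𝓞 k) Finset.univ (x n) ≠ 0 := by
      rw [FractionalIdeal.spanFinset_ne_zero]
      rcases Function.ne_iff.mp (hxn n) with ⟨j, hj⟩
      exact ⟨j, Finset.mem_univ j, hj⟩
    have h2 := absNorm_anti (hspanle n) h1
    unfold hNorm
    exact_mod_cast h2
  set C₂ : ℝ := (∏ v : InfinitePlace k, (A v + 1) ^ v.mult)
      / ((FractionalIdeal.absNorm J : ℚ) : ℝ) with hC₂def
  have hC₂pos : 0 < C₂ :=
    div_pos (Finset.prod_pos fun v _ => pow_pos (by linarith [hA v]) _) hq0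
  set C₃ : ℝ := C₂ ^ ((Module.finrank ℚ k : ℝ)⁻¹) with hC₃def
  have hC₃pos : 0 < C₃ := Real.rpow_pos_of_pos hC₂pos _
  have hC₃pow : C₃ ^ (Module.finrank ℚ k) = C₂ := by
    rw [hC₃def, ← Real.rpow_natCast (C₂ ^ ((Module.finrank ℚ k : ℝ)⁻¹)) (Module.finrank ℚ k),
      ← Real.rpow_mul hC₂pos.le, inv_mul_cancel₀ (finrank_ne_zero' (k := k)), Real.rpow_one]
  have hheight : ∀ i, projHeight k (Z' (N i)) ≤ (N i : ℝ) * C₃ := by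
    intro i
    have hZe : Z' (N i) = Projectivization.mk k (x (N i)) (hxn (N i)) := rfl
    rw [hZe, projHeight_mk (x (N i)) (hxn (N i))]
    apply vecHeight_le_of (mul_nonneg (Nat.cast_nonneg _) hC₃pos.le) (hxn (N i))
    have h1 : (∏ v : InfinitePlace k, (⨆ j, v (x (N i) j)) ^ v.mult)
        ≤ ∏ v : InfinitePlace k, ((N i:ℝ) * (A v + 1)) ^ v.mult :=
      Finset.prod_le_prod (fun v _ => pow_nonneg (my_sup_nonneg v _) _)
        (fun v _ => pow_le_pow_left₀ (my_sup_nonneg v _) (hYub2 i v) _)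
    have h2 : ∏ v : InfinitePlace k, ((N i:ℝ) * (A v + 1)) ^ v.mult
        = (N i:ℝ) ^ (Module.finrank ℚ k) * ∏ v : InfinitePlace k, (A v + 1) ^ v.mult := by
      simp_rw [mul_pow]
      rw [Finset.prod_mul_distrib, Finset.prod_pow_eq_pow_sum, InfinitePlace.sum_mult_eq]
    have h3 : hBase (x (N i)) ≤ (N i:ℝ) ^ (Module.finrank ℚ k) * C₂ := by
      rw [hBase]
      calc (∏ v : InfinitePlace k, (⨆ j, v (x (N i) j)) ^ v.mult) / hNorm (x (N i))
          ≤ (∏ v : InfinitePlace k, ((N i:ℝ) * (A v + 1)) ^ v.mult)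
            / ((FractionalIdeal.absNorm J : ℚ) : ℝ) :=
            div_le_div₀ (Finset.prod_nonneg fun v _ =>
              pow_nonneg (mul_nonneg (Nat.cast_nonneg _) (by linarith [hA v])) _) h1 hq0
              (hNle (N i))
        _ = (N i:ℝ) ^ (Module.finrank ℚ k) * C₂ := by rw [h2, hC₂def]; ring
    calc hBase (x (N i)) ≤ (N i:ℝ) ^ (Module.finrank ℚ k) * C₂ := h3
      _ = ((N i:ℝ) * C₃) ^ (Module.finrank ℚ k) := by rw [mul_pow, hC₃pow]
  refine ⟨fun i => Z' (N i), fun i => hZ'R (N i), ?_, ⟨C₁ * C₃, ?_⟩⟩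
  · apply squeeze_zero (fun i => projDist_nonneg R _) hdistle
    have h1 : Tendsto (fun i : ℕ => ((N i : ℕ) : ℝ)) atTop atTop :=
      tendsto_natCast_atTop_atTop.comp (tendsto_add_atTop_nat _)
    exact Tendsto.div_atTop tendsto_const_nhds h1
  · intro i
    have hNpos : (0:ℝ) < (N i:ℝ) := lt_of_lt_of_le zero_lt_one (hN1 i)
    calc projDist k R (Z' (N i)) * projHeight k (Z' (N i))
        ≤ (C₁/(N i:ℝ)) * ((N i:ℝ) * C₃) :=
          mul_le_mul (hdistle i) (hheight i) (projHeight_pos _).le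
            (div_nonneg hC₁nonneg hNpos.le)
      _ = C₁ * C₃ := by
          field_simp
lemma p1p1Dist_nonneg (x y : Projectivization k (Fin 2 → k) × Projectivization k (Fin 2 → k)) :
    0 ≤ p1p1Dist k x y :=
  le_trans (projDist_nonneg _ _) (le_max_left _ _)

lemma p1p1Height_pos (a b : ℕ)
    (x : Projectivization k (Fin 2 → k) × Projectivization k (Fin 2 → k)) :
    0 < p1p1Height k a b x :=
  mul_pos (pow_pos (projHeight_pos _) _) (pow_pos (projHeight_pos _) _)

lemma real_key {d Hf Hp Hz Ho : ℝ} {m e f : ℝ} (hm0 : 0 ≤ m) (hme : m ≤ e)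
    (hHz : 1 ≤ Hz) (hHo : 1 ≤ Ho) (hHf : 0 < Hf) (hfp : Hf ≤ Hp) (hf0 : 0 ≤ f)
    (hd : 1 / (Hf * Hz) ≤ d) (hd0 : 0 ≤ d) :
    (1 / Hp) ^ m ≤ d ^ m * (Hz ^ e * Ho ^ f) := by
  have hHz0 : (0:ℝ) < Hz := lt_of_lt_of_le zero_lt_one hHz
  have hHp : 0 < Hp := lt_of_lt_of_le hHf hfp
  have h1 : 1 / Hp ≤ d * Hz := by
    have h2 : 1 / Hf ≤ d * Hz := by
      have h3 : 1 / Hf = (1 / (Hf * Hz)) * Hz := by field_simp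
      rw [h3]
      exact mul_le_mul_of_nonneg_right hd hHz0.le
    calc 1 / Hp ≤ 1 / Hf := one_div_le_one_div_of_le hHf hfp
      _ ≤ d * Hz := h2
  calc (1 / Hp) ^ m ≤ (d * Hz) ^ m :=
        Real.rpow_le_rpow (by positivity) h1 hm0
    _ = d ^ m * Hz ^ m := Real.mul_rpow hd0 hHz0.le
    _ ≤ d ^ m * (Hz ^ e * Ho ^ f) := by
        apply mul_le_mul_of_nonneg_left _ (Real.rpow_nonneg hd0 m)
        calc Hz ^ m ≤ Hz ^ e := Real.rpow_le_rpow_of_exponent_le hHz hme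
          _ = Hz ^ e * 1 := (mul_one _).symm
          _ ≤ Hz ^ e * Ho ^ f := by
              apply mul_le_mul_of_nonneg_left _ (Real.rpow_nonneg (by linarith) e)
              exact Real.one_le_rpow hHo hf0

lemma dist_height_lb (P Z : Projectivization k (Fin 2 → k) × Projectivization k (Fin 2 → k))
    (a b : ℕ) (hZ : Z ≠ P) :
    0 < p1p1Dist k P Z ∧
    (1 / max (projHeight k P.1) (projHeight k P.2)) ^ (min (a:ℝ) (b:ℝ))
      ≤ p1p1Dist k P Z ^ (min (a:ℝ) (b:ℝ)) * p1p1Height k a b Z := by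
  have hm0 : (0:ℝ) ≤ min (a:ℝ) (b:ℝ) := le_min (Nat.cast_nonneg a) (Nat.cast_nonneg b)
  have hd0 : 0 ≤ p1p1Dist k P Z := p1p1Dist_nonneg P Z
  have hrw : p1p1Height k a b Z
      = projHeight k Z.1 ^ ((a:ℕ):ℝ) * projHeight k Z.2 ^ ((b:ℕ):ℝ) := by
    rw [p1p1Height, Real.rpow_natCast, Real.rpow_natCast]
  by_cases h1 : Z.1 = P.1
  · have h2 : Z.2 ≠ P.2 := by
      intro h2
      exact hZ (Prod.ext h1 h2)
    have hdl : 1 / (projHeight k P.2 * projHeight k Z.2) ≤ p1p1Dist k P Z :=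
      le_trans (liouville (Ne.symm h2)) (le_max_right _ _)
    constructor
    · exact lt_of_lt_of_le (one_div_pos.mpr (mul_pos (projHeight_pos _) (projHeight_pos _))) hdl
    · rw [hrw, mul_comm (projHeight k Z.1 ^ ((a:ℕ):ℝ))]
      exact real_key hm0 (min_le_right _ _) (one_le_projHeight _) (one_le_projHeight _)
        (projHeight_pos _) (le_max_right _ _) (Nat.cast_nonneg a) hdl hd0
  · have hdl : 1 / (projHeight k P.1 * projHeight k Z.1) ≤ p1p1Dist k P Z :=
      le_trans (liouville (Ne.symm h1)) (le_max_left _ _)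
    constructor
    · exact lt_of_lt_of_le (one_div_pos.mpr (mul_pos (projHeight_pos _) (projHeight_pos _))) hdl
    · rw [hrw]
      exact real_key hm0 (min_le_left _ _) (one_le_projHeight _) (one_le_projHeight _)
        (projHeight_pos _) (le_max_left _ _) (Nat.cast_nonneg b) hdl hd0

lemma global_lb (P : Projectivization k (Fin 2 → k) × Projectivization k (Fin 2 → k))
    (a b : ℕ) (Q : ℕ → Projectivization k (Fin 2 → k) × Projectivization k (Fin 2 → k))
    (hne : ∀ i, Q i ≠ P)
    (htd : Tendsto (fun i => p1p1Dist k P (Q i)) atTop (𝓝 0)) {β : ℝ} (hβ0 : 0 ≤ β)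
    (C : ℝ) (hC : ∀ i, p1p1Dist k P (Q i) ^ β * p1p1Height k a b (Q i) ≤ C) :
    min (a:ℝ) (b:ℝ) ≤ β := by
  by_contra hlt
  push_neg at hlt
  set m := min (a:ℝ) (b:ℝ) with hmdef
  set Hp := max (projHeight k P.1) (projHeight k P.2) with hHpdef
  have hHp : 0 < Hp := lt_of_lt_of_le (projHeight_pos _) (le_max_left _ _)
  set c₅ := (1 / Hp) ^ m with hc₅def
  have hc₅ : 0 < c₅ := Real.rpow_pos_of_pos (by positivity) _
  have hkey := fun i => (dist_height_lb P (Q i) a b (hne i)).2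
  have hdpos := fun i => (dist_height_lb P (Q i) a b (hne i)).1
  have hmain : ∀ i, c₅ ≤ C * p1p1Dist k P (Q i) ^ (m - β) := by
    intro i
    have h1 : p1p1Dist k P (Q i) ^ m
        = p1p1Dist k P (Q i) ^ (m - β) * p1p1Dist k P (Q i) ^ β := by
      rw [← Real.rpow_add (hdpos i)]
      ring_nf
    calc c₅ ≤ p1p1Dist k P (Q i) ^ m * p1p1Height k a b (Q i) := hkey i
      _ = p1p1Dist k P (Q i) ^ (m - β)
          * (p1p1Dist k P (Q i) ^ β * p1p1Height k a b (Q i)) := by rw [h1]; ring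
      _ ≤ p1p1Dist k P (Q i) ^ (m - β) * C :=
          mul_le_mul_of_nonneg_left (hC i) (Real.rpow_nonneg (hdpos i).le _)
      _ = C * p1p1Dist k P (Q i) ^ (m - β) := mul_comm _ _
  have htend : Tendsto (fun i => C * p1p1Dist k P (Q i) ^ (m - β)) atTop (𝓝 0) := by
    have hsub : (0:ℝ) < m - β := by linarith
    have hcont : ContinuousAt (fun z : ℝ => z ^ (m - β)) 0 :=
      Real.continuousAt_rpow_const 0 (m - β) (Or.inr hsub.le)
    have h2 := hcont.tendsto.comp htd
    rw [Real.zero_rpow hsub.ne'] at h2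
    simpa using h2.const_mul C
  obtain ⟨i, hi⟩ := (htend.eventually_lt_const hc₅).exists
  exact absurd (hmain i) (not_le.mpr hi)

lemma fibre_second (P : Projectivization k (Fin 2 → k) × Projectivization k (Fin 2 → k))
    (a b : ℕ) :
    ∃ Q : ℕ → Projectivization k (Fin 2 → k) × Projectivization k (Fin 2 → k),
      (∀ i, (Q i).1 = P.1) ∧ (∀ i, Q i ≠ P) ∧
      Tendsto (fun i => p1p1Dist k P (Q i)) atTop (𝓝 0) ∧
      ∃ C : ℝ, ∀ i, p1p1Dist k P (Q i) ^ ((b:ℕ):ℝ) * p1p1Height k a b (Q i) ≤ C := by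
  obtain ⟨Z, hZne, hZtd, C, hZC⟩ := approx_fibre P.2
  have hdeq : ∀ i, p1p1Dist k P (P.1, Z i) = projDist k P.2 (Z i) := by
    intro i
    rw [p1p1Dist]
    simp only
    rw [projDist_self]
    exact max_eq_right (projDist_nonneg _ _)
  refine ⟨fun i => (P.1, Z i), fun i => rfl, ?_, ?_, ?_⟩
  · intro i h
    exact hZne i (congrArg Prod.snd h)
  · simpa only [hdeq] using hZtd
  · refine ⟨projHeight k P.1 ^ a * (max C 0) ^ b, fun i => ?_⟩
    rw [hdeq i, Real.rpow_natCast, p1p1Height]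
    simp only
    have h1 : projDist k P.2 (Z i) ^ b * projHeight k (Z i) ^ b
        = (projDist k P.2 (Z i) * projHeight k (Z i)) ^ b := (mul_pow _ _ _).symm
    calc projDist k P.2 (Z i) ^ b * (projHeight k P.1 ^ a * projHeight k (Z i) ^ b)
        = projHeight k P.1 ^ a * (projDist k P.2 (Z i) * projHeight k (Z i)) ^ b := by
          rw [← h1]; ring
      _ ≤ projHeight k P.1 ^ a * (max C 0) ^ b := by
          apply mul_le_mul_of_nonneg_left _ (pow_nonneg (projHeight_pos _).le _)
          apply pow_le_pow_left₀
            (mul_nonneg (projDist_nonneg _ _) (projHeight_pos _).le)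
            (le_trans (hZC i) (le_max_left _ _))

lemma fibre_first (P : Projectivization k (Fin 2 → k) × Projectivization k (Fin 2 → k))
    (a b : ℕ) :
    ∃ Q : ℕ → Projectivization k (Fin 2 → k) × Projectivization k (Fin 2 → k),
      (∀ i, (Q i).2 = P.2) ∧ (∀ i, Q i ≠ P) ∧
      Tendsto (fun i => p1p1Dist k P (Q i)) atTop (𝓝 0) ∧
      ∃ C : ℝ, ∀ i, p1p1Dist k P (Q i) ^ ((a:ℕ):ℝ) * p1p1Height k a b (Q i) ≤ C := by
  obtain ⟨Z, hZne, hZtd, C, hZC⟩ := approx_fibre P.1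
  have hdeq : ∀ i, p1p1Dist k P (Z i, P.2) = projDist k P.1 (Z i) := by
    intro i
    rw [p1p1Dist]
    simp only
    rw [projDist_self]
    exact max_eq_left (projDist_nonneg _ _)
  refine ⟨fun i => (Z i, P.2), fun i => rfl, ?_, ?_, ?_⟩
  · intro i h
    exact hZne i (congrArg Prod.fst h)
  · simpa only [hdeq] using hZtd
  · refine ⟨(max C 0) ^ a * projHeight k P.2 ^ b, fun i => ?_⟩
    rw [hdeq i, Real.rpow_natCast, p1p1Height]
    simp only
    have h1 : projDist k P.1 (Z i) ^ a * projHeight k (Z i) ^ a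
        = (projDist k P.1 (Z i) * projHeight k (Z i)) ^ a := (mul_pow _ _ _).symm
    calc projDist k P.1 (Z i) ^ a * (projHeight k (Z i) ^ a * projHeight k P.2 ^ b)
        = (projDist k P.1 (Z i) * projHeight k (Z i)) ^ a * projHeight k P.2 ^ b := by
          rw [← h1]; ring
      _ ≤ (max C 0) ^ a * projHeight k P.2 ^ b := by
          apply mul_le_mul_of_nonneg_right _ (pow_nonneg (projHeight_pos _).le _)
          apply pow_le_pow_left₀
            (mul_nonneg (projDist_nonneg _ _) (projHeight_pos _).le)
            (le_trans (hZC i) (le_max_left _ _))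

variable (k)

/-- For `P = (P₁,P₂) ∈ ℙ¹(k) × ℙ¹(k)` and positive integers `a, b`, the
approximation constant of `P` with respect to `H_{a,b}` equals `min(a,b)`, and a sequence
of best approximation can be chosen in the fibre `{P₁} × ℙ¹(k)` when `b ≤ a`, and in
`ℙ¹(k) × {P₂}` when `a ≤ b`. -/
theorem statement9
    (P : Projectivization k (Fin 2 → k) × Projectivization k (Fin 2 → k))
    (a b : ℕ) (ha : 1 ≤ a) (hb : 1 ≤ b) :
    IsPointApproxConst (p1p1Dist k) (p1p1Height k a b) Set.univ P (min (a : ℝ) (b : ℝ)) ∧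
    (b ≤ a → ∃ Q : ℕ → Projectivization k (Fin 2 → k) × Projectivization k (Fin 2 → k),
      IsBestApproxSeq (p1p1Dist k) (p1p1Height k a b) Set.univ P Q ∧ ∀ i, (Q i).1 = P.1) ∧
    (a ≤ b → ∃ Q : ℕ → Projectivization k (Fin 2 → k) × Projectivization k (Fin 2 → k),
      IsBestApproxSeq (p1p1Dist k) (p1p1Height k a b) Set.univ P Q ∧ ∀ i, (Q i).2 = P.2) := by
  have hm0 : (0:ℝ) ≤ min (a:ℝ) (b:ℝ) := le_min (Nat.cast_nonneg a) (Nat.cast_nonneg b)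
  have hconst2 : ∀ Q : ℕ → Projectivization k (Fin 2 → k) × Projectivization k (Fin 2 → k),
      (∀ i, Q i ≠ P) → Tendsto (fun i => p1p1Dist k P (Q i)) atTop (𝓝 0) →
      (∃ C : ℝ, ∀ i, p1p1Dist k P (Q i) ^ (min (a:ℝ) (b:ℝ)) * p1p1Height k a b (Q i) ≤ C) →
      IsApproxConst (p1p1Dist k) (p1p1Height k a b) P Q (min (a:ℝ) (b:ℝ)) := by
    intro Q hne htd hC
    constructor
    · exact ⟨hm0, hC⟩
    · rintro β ⟨hβ0, C', hC'⟩
      exact global_lb P a b Q hne htd hβ0 C' hC'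
  have hseq : ∀ hba : (b:ℝ) ≤ (a:ℝ),
      ∃ Q : ℕ → Projectivization k (Fin 2 → k) × Projectivization k (Fin 2 → k),
      (∀ i, (Q i).1 = P.1) ∧ ApproxSeq (p1p1Dist k) P Q ∧
      IsApproxConst (p1p1Dist k) (p1p1Height k a b) P Q (min (a:ℝ) (b:ℝ)) := by
    intro hba
    obtain ⟨Q, hQ1, hQne, hQtd, C, hQC⟩ := fibre_second P a b
    have hmin : min (a:ℝ) (b:ℝ) = ((b:ℕ):ℝ) := min_eq_right hba
    exact ⟨Q, hQ1, ⟨hQne, hQtd⟩, hconst2 Q hQne hQtd ⟨C, by rw [hmin]; exact hQC⟩⟩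
  have hseq' : ∀ hab : (a:ℝ) ≤ (b:ℝ),
      ∃ Q : ℕ → Projectivization k (Fin 2 → k) × Projectivization k (Fin 2 → k),
      (∀ i, (Q i).2 = P.2) ∧ ApproxSeq (p1p1Dist k) P Q ∧
      IsApproxConst (p1p1Dist k) (p1p1Height k a b) P Q (min (a:ℝ) (b:ℝ)) := by
    intro hab
    obtain ⟨Q, hQ2, hQne, hQtd, C, hQC⟩ := fibre_first P a b
    have hmin : min (a:ℝ) (b:ℝ) = ((a:ℕ):ℝ) := min_eq_left hab
    exact ⟨Q, hQ2, ⟨hQne, hQtd⟩, hconst2 Q hQne hQtd ⟨C, by rw [hmin]; exact hQC⟩⟩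
  have hmain : IsPointApproxConst (p1p1Dist k) (p1p1Height k a b) Set.univ P
      (min (a:ℝ) (b:ℝ)) := by
    constructor
    · rcases le_total (b:ℝ) (a:ℝ) with hba | hab
      · obtain ⟨Q, _, hQ2, hQ3⟩ := hseq hba
        exact ⟨Q, fun i => Set.mem_univ _, hQ2, hQ3⟩
      · obtain ⟨Q, _, hQ2, hQ3⟩ := hseq' hab
        exact ⟨Q, fun i => Set.mem_univ _, hQ2, hQ3⟩
    · rintro α ⟨Q, -, ⟨hQne, hQtd⟩, ⟨hα0, C, hC⟩, -⟩
      exact global_lb P a b Q hQne hQtd hα0 C hC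
  refine ⟨hmain, ?_, ?_⟩
  · intro hba
    obtain ⟨Q, hQ1, hQ2, hQ3⟩ := hseq (by exact_mod_cast hba)
    exact ⟨Q, ⟨fun i => Set.mem_univ _, hQ2, min (a:ℝ) (b:ℝ), hQ3, hmain⟩, hQ1⟩
  · intro hab
    obtain ⟨Q, hQ2', hQ2, hQ3⟩ := hseq' (by exact_mod_cast hab)
    exact ⟨Q, ⟨fun i => Set.mem_univ _, hQ2, min (a:ℝ) (b:ℝ), hQ3, hmain⟩, hQ2'⟩

end
end

section
/- Let n ≥ 2 and k ≥ 1 be integers with k < n. In ℝ^{k+2} with coordinates (a, b, f₁, …, f_k), let C = {(a, b, f₁, …, f_k) : b − n·a ≥ 0, and a + f_i ≥ 0 and f_i ≤ 0 for all 1 ≤ i ≤ k}. For each α = (α₁, …, α_k) ∈ {0,1}^k set D_α = (1, n, −α₁, …, −α_k), and set F = (0, 1, 0, …, 0). Then C = cone({F} ∪ {D_α : α ∈ {0,1}^k}). -/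
/-- The convex cone generated by a set `s`: all finite nonnegative real linear
combinations of elements of `s`. -/
def coneHull {E : Type*} [AddCommMonoid E] [Module ℝ E] (s : Set E) : Set E :=
  {x | ∃ (n : ℕ) (c : Fin n → ℝ) (g : Fin n → E),
    (∀ i, 0 ≤ c i) ∧ (∀ i, g i ∈ s) ∧ x = ∑ i, c i • g i}

/-- A point of the cube `[0,a]^K` is a nonnegative combination of `{0,1}`-vectors
with total mass `a`. -/
lemma cube_decomp : ∀ (K : ℕ) (a : ℝ), 0 ≤ a → ∀ t : Fin K → ℝ,
    (∀ i, 0 ≤ t i ∧ t i ≤ a) →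
    ∃ (m : ℕ) (c : Fin m → ℝ) (α : Fin m → Fin K → ℝ),
      (∀ j, 0 ≤ c j) ∧ (∀ j i, α j i = 0 ∨ α j i = 1) ∧ (∑ j, c j = a) ∧
      ∀ i, (∑ j, c j * α j i) = t i := by
  intro K
  induction K with
  | zero =>
    intro a ha t _
    exact ⟨1, fun _ => a, fun _ => Fin.elim0, fun _ => ha, fun _ i => i.elim0,
      by simp, fun i => i.elim0⟩
  | succ K ih =>
    intro a ha t ht
    obtain ⟨m, c, α, hc, hα, hsum, hcoord⟩ := ih a ha (fun i => t i.succ)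
      (fun i => ht i.succ)
    set t0 := t 0 with ht0def
    obtain ⟨ht0, ht0a⟩ := ht 0
    set c' : ℕ → ℝ := fun l => if h : l < m then c ⟨l, h⟩ else 0 with hc'def
    set S : ℕ → ℝ := fun j => ∑ l ∈ Finset.range j, c' l with hSdef
    have hc' : ∀ l, 0 ≤ c' l := by
      intro l
      simp only [hc'def]
      split
      · exact hc _
      · exact le_rfl
    have hSstep : ∀ j : Fin m, S (j + 1) = S j + c j := by
      intro j
      simp only [hSdef, Finset.sum_range_succ]
      congr 1
      simp [hc'def, j.isLt]
    have hSm : S m = a := by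
      rw [← hsum]
      simp only [hSdef]
      rw [← Fin.sum_univ_eq_sum_range]
      apply Finset.sum_congr rfl
      intro j _
      simp [hc'def, j.isLt]
    -- the two families of coefficients
    set c1 : Fin m → ℝ := fun j => min (S (j + 1)) t0 - min (S j) t0 with hc1def
    set c2 : Fin m → ℝ := fun j => c j - c1 j with hc2def
    have hc1nonneg : ∀ j, 0 ≤ c1 j := by
      intro j
      have : S j ≤ S (j + 1) := by rw [hSstep j]; linarith [hc j]
      simp only [hc1def, sub_nonneg]
      exact min_le_min this le_rfl
    have hc2nonneg : ∀ j, 0 ≤ c2 j := by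
      intro j
      simp only [hc2def, hc1def, hSstep j]
      rcases le_total t0 (S j) with h | h
      · rw [min_eq_right h, min_eq_right (by linarith [hc j])]
        simp [hc j]
      · rw [min_eq_left h]
        have : min (S j + c j) t0 ≤ S j + c j := min_le_left _ _
        linarith
    have hsum1 : ∑ j, c1 j = t0 := by
      rw [hc1def, Fin.sum_univ_eq_sum_range (fun j => min (S (j + 1)) t0 - min (S j) t0),
        Finset.sum_range_sub (fun j => min (S j) t0), hSm]
      simp only [hSdef, Finset.range_zero, Finset.sum_empty]
      rw [min_eq_right ht0a, min_eq_left ht0]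
      simp [ht0def]
    -- assemble over `Fin m ⊕ Fin m`
    set cs : Fin m ⊕ Fin m → ℝ := Sum.elim c1 c2 with hcsdef
    set αs : Fin m ⊕ Fin m → Fin (K + 1) → ℝ :=
      Sum.elim (fun j => Fin.cons 1 (α j)) (fun j => Fin.cons 0 (α j)) with hαsdef
    refine ⟨m + m, cs ∘ finSumFinEquiv.symm, αs ∘ finSumFinEquiv.symm, ?_, ?_, ?_, ?_⟩
    · intro j
      rcases h : finSumFinEquiv.symm j with j' | j'
      · simp only [Function.comp_apply, h, hcsdef, Sum.elim_inl]
        exact hc1nonneg j'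
      · simp only [Function.comp_apply, h, hcsdef, Sum.elim_inr]
        exact hc2nonneg j'
    · intro j i
      rcases h : finSumFinEquiv.symm j with j' | j' <;>
      · simp only [Function.comp_apply, h, hαsdef, Sum.elim_inl, Sum.elim_inr]
        refine Fin.cases ?_ ?_ i <;> simp [hα]
    · rw [show (∑ j : Fin (m + m), (cs ∘ finSumFinEquiv.symm) j)
          = ∑ x : Fin m ⊕ Fin m, cs x from Equiv.sum_comp finSumFinEquiv.symm cs]
      rw [hcsdef, Fintype.sum_sum_type]
      simp only [Sum.elim_inl, Sum.elim_inr, hc2def]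
      rw [← Finset.sum_add_distrib]
      simp [hsum]
    · intro i
      rw [show (∑ j : Fin (m + m), (cs ∘ finSumFinEquiv.symm) j * (αs ∘ finSumFinEquiv.symm) j i)
          = ∑ x : Fin m ⊕ Fin m, cs x * αs x i from
          Equiv.sum_comp finSumFinEquiv.symm (fun x => cs x * αs x i)]
      rw [Fintype.sum_sum_type]
      simp only [hcsdef, hαsdef, Sum.elim_inl, Sum.elim_inr]
      refine Fin.cases ?_ ?_ i
      · simp [hsum1]
        exact ht0def
      · intro i'
        simp only [Fin.cons_succ]
        rw [← Finset.sum_add_distrib]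
        rw [← hcoord i']
        apply Finset.sum_congr rfl
        intro j _
        simp only [hc2def]
        ring

/-- For `n ≥ 2`, `1 ≤ k < n`, the cone
`C = {(a,b,f) : b − n·a ≥ 0, a + fᵢ ≥ 0, fᵢ ≤ 0}` in `ℝ^{k+2}` is generated by
`F = (0,1,0)` and the vectors `D_α = (1, n, −α)` for `α ∈ {0,1}^k`. -/
theorem statement11 (n K : ℕ) (hn : 2 ≤ n) (hK : 1 ≤ K) (hKn : K < n) :
    {p : ℝ × ℝ × (Fin K → ℝ) |
        0 ≤ p.2.1 - (n : ℝ) * p.1 ∧ ∀ i, 0 ≤ p.1 + p.2.2 i ∧ p.2.2 i ≤ 0} =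
      coneHull ({((0 : ℝ), (1 : ℝ), (0 : Fin K → ℝ))} ∪
        {p | ∃ α : Fin K → ℝ, (∀ i, α i = 0 ∨ α i = 1) ∧
          p = ((1 : ℝ), (n : ℝ), fun i => -α i)}) := by
  ext p
  constructor
  · rintro ⟨h1, h2⟩
    obtain ⟨a, b, f⟩ := p
    simp only [Set.mem_setOf_eq] at h1 h2
    have ha : 0 ≤ a := by
      obtain ⟨hf1, hf2⟩ := h2 ⟨0, hK⟩
      linarith
    obtain ⟨m, c, α, hc, hα, hsum, hcoord⟩ :=
      cube_decomp K a ha (fun i => -f i)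
        (by intro i; obtain ⟨hf1, hf2⟩ := h2 i
            exact ⟨by show (0:ℝ) ≤ -f i; linarith, by show -f i ≤ a; linarith⟩)
    refine ⟨m + 1, Fin.cons (b - n * a) c,
      Fin.cons ((0 : ℝ), (1 : ℝ), (0 : Fin K → ℝ))
        (fun j => ((1 : ℝ), (n : ℝ), fun i => -α j i)), ?_, ?_, ?_⟩
    · refine Fin.cases ?_ ?_ <;> simp_all
    · refine Fin.cases ?_ ?_
      · exact Or.inl rfl
      · intro j; exact Or.inr ⟨α j, hα j, rfl⟩
    · have hfst : (∑ j : Fin (m + 1),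
          ((Fin.cons (b - n * a) c : Fin (m + 1) → ℝ) j) •
            Fin.cons ((0 : ℝ), (1 : ℝ), (0 : Fin K → ℝ))
              (fun j => ((1 : ℝ), (n : ℝ), fun i => -α j i)) j) =
          (∑ j : Fin (m + 1), ((Fin.cons (b - n * a) c : Fin (m + 1) → ℝ) j) *
              ((Fin.cons (0 : ℝ) (fun _ => (1 : ℝ)) : Fin (m + 1) → ℝ) j),
           ∑ j : Fin (m + 1), ((Fin.cons (b - n * a) c : Fin (m + 1) → ℝ) j) *
              ((Fin.cons (1 : ℝ) (fun _ => (n : ℝ)) : Fin (m + 1) → ℝ) j),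
           fun i => ∑ j : Fin (m + 1), ((Fin.cons (b - n * a) c : Fin (m + 1) → ℝ) j) *
              ((Fin.cons (0 : Fin K → ℝ) (fun j => fun i' => -α j i') : Fin (m + 1) → Fin K → ℝ) j i)) := by
        rw [Prod.ext_iff, Prod.ext_iff]
        refine ⟨?_, ?_, ?_⟩
        · rw [Prod.fst_sum]
          apply Finset.sum_congr rfl
          intro j _
          refine Fin.cases ?_ (fun j' => ?_) j <;> simp
        · rw [Prod.snd_sum, Prod.fst_sum]
          apply Finset.sum_congr rfl
          intro j _
          refine Fin.cases ?_ (fun j' => ?_) j <;> simp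
        · rw [Prod.snd_sum, Prod.snd_sum]
          funext i
          rw [Finset.sum_apply]
          apply Finset.sum_congr rfl
          intro j _
          refine Fin.cases ?_ (fun j' => ?_) j <;> simp
      rw [hfst]
      rw [Prod.ext_iff, Prod.ext_iff]
      refine ⟨?_, ?_, ?_⟩
      · simp only [Fin.sum_univ_succ, Fin.cons_zero, Fin.cons_succ]
        rw [show (∑ j : Fin m, c j * (1 : ℝ)) = a by simpa using hsum]
        simp
      · simp only [Fin.sum_univ_succ, Fin.cons_zero, Fin.cons_succ]
        have : (∑ j : Fin m, c j * (n : ℝ)) = a * n := by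
          rw [← Finset.sum_mul, hsum]
        rw [this]
        ring_nf
      · funext i
        simp only [Fin.sum_univ_succ, Fin.cons_zero, Fin.cons_succ, Pi.zero_apply]
        have := hcoord i
        have h' : (∑ j : Fin m, c j * (-α j i)) = f i := by
          rw [show (∑ j : Fin m, c j * (-α j i)) = -∑ j : Fin m, c j * α j i by
            rw [← Finset.sum_neg_distrib]; apply Finset.sum_congr rfl; intros; ring]
          rw [this]; ring
        rw [h']
        ring
  · rintro ⟨m, c, g, hc, hg, rfl⟩
    have hfst : (∑ j : Fin m, c j • g j).1 = ∑ j : Fin m, c j * (g j).1 := by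
      rw [Prod.fst_sum]; apply Finset.sum_congr rfl; intros; simp
    have hsnd1 : (∑ j : Fin m, c j • g j).2.1 = ∑ j : Fin m, c j * (g j).2.1 := by
      rw [Prod.snd_sum, Prod.fst_sum]; apply Finset.sum_congr rfl; intros; simp
    have hsnd2 : ∀ i, (∑ j : Fin m, c j • g j).2.2 i = ∑ j : Fin m, c j * (g j).2.2 i := by
      intro i
      rw [Prod.snd_sum, Prod.snd_sum, Finset.sum_apply]
      apply Finset.sum_congr rfl; intros; simp
    have hkey : ∀ j, (0 ≤ (g j).2.1 - (n : ℝ) * (g j).1) ∧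
        ∀ i, (0 ≤ (g j).1 + (g j).2.2 i ∧ (g j).2.2 i ≤ 0) := by
      intro j
      rcases hg j with h | ⟨α, hα, h⟩
      · rw [h]; refine ⟨by norm_num, fun i => by norm_num⟩
      · rw [h]
        refine ⟨by norm_num, fun i => ?_⟩
        rcases hα i with h' | h' <;> simp [h'] <;> norm_num
    constructor
    · rw [hsnd1, hfst, Finset.mul_sum, ← Finset.sum_sub_distrib]
      apply Finset.sum_nonneg
      intro j _
      have := (hkey j).1
      have := hc j
      nlinarith
    · intro i
      constructor
      · rw [hfst, hsnd2 i, ← Finset.sum_add_distrib]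
        apply Finset.sum_nonneg
        intro j _
        have := ((hkey j).2 i).1
        have := hc j
        nlinarith
      · rw [hsnd2 i]
        apply Finset.sum_nonpos
        intro j _
        have := ((hkey j).2 i).2
        have := hc j
        nlinarith
end

section
/- Let β be the symmetric bilinear form on ℝ⁴ with ordered basis (F, e₂, f₂, s) determined by β(F,F) = 0, β(e₂,e₂) = −1, β(f₂,f₂) = −1, β(s,s) = −2, β(F,s) = 1, and β(u,v) = 0 for every other pair of distinct basis vectors. Set e₁ = F − e₂, f₁ = F − f₂, D₂ = 2F + s, D₁ = 2F − e₂ + s, D₁′ = 2F − f₂ + s, and D₀ = 2F − e₂ − f₂ + s. Then {x ∈ ℝ⁴ : β(x, v) ≥ 0 for every v ∈ {s, e₁, e₂, f₁, f₂}} = cone({F, D₂, D₁, D₁′, D₀}). -/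
/-- The intersection form on `ℝ⁴` in the ordered basis `(F, e₂, f₂, s)` determined by
`β(F,F)=0`, `β(e₂,e₂)=−1`, `β(f₂,f₂)=−1`, `β(s,s)=−2`, `β(F,s)=1`, and `β = 0` on every
other pair of distinct basis vectors. -/
def interForm12 (x y : Fin 4 → ℝ) : ℝ :=
  x 0 * y 3 + x 3 * y 0 - x 1 * y 1 - x 2 * y 2 - 2 * (x 3 * y 3)

lemma interForm12_sum {n : ℕ} (c : Fin n → ℝ) (g : Fin n → (Fin 4 → ℝ)) (v : Fin 4 → ℝ) :
    interForm12 (∑ i, c i • g i) v = ∑ i, c i * interForm12 (g i) v := by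
  simp only [interForm12, Finset.sum_apply, Pi.smul_apply, smul_eq_mul, Finset.sum_mul]
  rw [← Finset.sum_add_distrib, ← Finset.sum_sub_distrib, ← Finset.sum_sub_distrib,
    Finset.mul_sum, ← Finset.sum_sub_distrib]
  exact Finset.sum_congr rfl fun i _ => by ring


/-- With `e₁ = F − e₂`, `f₁ = F − f₂`, `D₂ = 2F + s`,
`D₁ = 2F − e₂ + s`, `D₁′ = 2F − f₂ + s`, `D₀ = 2F − e₂ − f₂ + s`, the dual cone of
`{s, e₁, e₂, f₁, f₂}` with respect to the intersection form is generated by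
`F, D₂, D₁, D₁′, D₀`. -/
theorem statement12 :
    {x : Fin 4 → ℝ | ∀ v ∈ ({![0, 0, 0, 1], ![1, -1, 0, 0], ![0, 1, 0, 0],
        ![1, 0, -1, 0], ![0, 0, 1, 0]} : Set (Fin 4 → ℝ)), 0 ≤ interForm12 x v} =
      coneHull {![1, 0, 0, 0], ![2, 0, 0, 1], ![2, -1, 0, 1], ![2, 0, -1, 1],
        ![2, -1, -1, 1]} := by
  ext x
  constructor
  · intro h
    have h1 := h ![0,0,0,1] (by simp)
    have h2 := h ![1,-1,0,0] (by simp)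
    have h3 := h ![0,1,0,0] (by simp)
    have h4 := h ![1,0,-1,0] (by simp)
    have h5 := h ![0,0,1,0] (by simp)
    simp only [interForm12, Matrix.cons_val_zero, Matrix.cons_val_one, Matrix.head_cons,
      Matrix.cons_val_two, Matrix.tail_cons, Matrix.cons_val_three] at h1 h2 h3 h4 h5
    set a := x 0 with ha; set b := x 1 with hb; set c := x 2 with hc; set d := x 3 with hd
    rcases le_total c b with hbc | hbc
    · refine ⟨5, ![a - 2*d, d + c, 0, b - c, -b],
        ![![1,0,0,0], ![2,0,0,1], ![2,-1,0,1], ![2,0,-1,1], ![2,-1,-1,1]], ?_, ?_, ?_⟩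
      · intro i
        fin_cases i <;> simp <;> linarith
      · intro i; fin_cases i <;> simp
      · funext j
        fin_cases j <;>
          simp [Fin.sum_univ_five, Matrix.vecHead, Matrix.vecTail, ← ha, ← hb, ← hc, ← hd] <;>
          ring
    · refine ⟨5, ![a - 2*d, d + b, c - b, 0, -c],
        ![![1,0,0,0], ![2,0,0,1], ![2,-1,0,1], ![2,0,-1,1], ![2,-1,-1,1]], ?_, ?_, ?_⟩
      · intro i
        fin_cases i <;> simp <;> linarith
      · intro i; fin_cases i <;> simp
      · funext j
        fin_cases j <;>
          simp [Fin.sum_univ_five, Matrix.vecHead, Matrix.vecTail, ← ha, ← hb, ← hc, ← hd] <;>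
          ring
  · rintro ⟨n, c, g, hc, hg, rfl⟩
    intro v hv
    rw [interForm12_sum]
    apply Finset.sum_nonneg
    intro i _
    apply mul_nonneg (hc i)
    have hgi := hg i
    simp only [Set.mem_insert_iff, Set.mem_singleton_iff] at hv hgi
    rcases hgi with h | h | h | h | h <;>
      rcases hv with hv | hv | hv | hv | hv <;> subst hv <;> rw [h] <;>
      simp [interForm12, Fin.isValue] <;> norm_num
end
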